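/- Let (X₀,X₁) be a positive C-Calderón couple of Banach lattices of measurable functions on a common measure space (Ω,Σ,μ), for some constant C > 0, and suppose that X₀ and X₁ are both complete lattices. Then for every p ∈ (1,∞), the couple of p-convexifications (X₀^(p), X₁^(p)) is a 2^{1−1/p} C^{1/p}-Calderón couple; that is, whenever f,g ∈ X₀^(p)+X₁^(p) satisfy K(t,g;X₀^(p),X₁^(p)) ≤ K(t,f;X₀^(p),X₁^(p)) for all t>0, there exists a bounded linear operator L:(X₀^(p),X₁^(p))→(X₀^(p),X₁^(p)) with Lf = g and ‖L‖_{Xⱼ^(p)→Xⱼ^(p)} ≤ 2^{1−1/p} C^{1/p} for j=0,1. -/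

import Mathlib

open MeasureTheory

/-- A Banach lattice of (a.e.-equivalence classes of) real-valued measurable
functions on a measure space `(Ω, μ)`: a linear subspace of `Ω →ₘ[μ] ℝ` with a complete
norm satisfying the lattice (ideal) property. -/
structure BanachFunctionLattice (Ω : Type*) [MeasurableSpace Ω] (μ : MeasureTheory.Measure Ω) where
  carrier : Set (Ω →ₘ[μ] ℝ)
  norm : (Ω →ₘ[μ] ℝ) → ℝ
  zero_mem : 0 ∈ carrier
  add_mem : ∀ {f g}, f ∈ carrier → g ∈ carrier → f + g ∈ carrier
  smul_mem : ∀ (c : ℝ) {f}, f ∈ carrier → c • f ∈ carrier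
  norm_nonneg : ∀ f ∈ carrier, 0 ≤ norm f
  norm_eq_zero_iff : ∀ f ∈ carrier, (norm f = 0 ↔ f = 0)
  norm_add_le : ∀ f ∈ carrier, ∀ g ∈ carrier, norm (f + g) ≤ norm f + norm g
  norm_smul : ∀ (c : ℝ), ∀ f ∈ carrier, norm (c • f) = |c| * norm f
  ideal_mem : ∀ f ∈ carrier, ∀ g : (Ω →ₘ[μ] ℝ), |g| ≤ |f| → g ∈ carrier
  ideal_norm_le : ∀ f ∈ carrier, ∀ g : (Ω →ₘ[μ] ℝ), |g| ≤ |f| → norm g ≤ norm f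
  complete : ∀ u : ℕ → (Ω →ₘ[μ] ℝ), (∀ n, u n ∈ carrier) →
    (∀ ε > 0, ∃ N, ∀ m ≥ N, ∀ n ≥ N, norm (u m - u n) < ε) →
    ∃ f ∈ carrier, ∀ ε > 0, ∃ N, ∀ n ≥ N, norm (u n - f) < ε

variable {Ω : Type*} [MeasurableSpace Ω] {μ : MeasureTheory.Measure Ω}

/-- The a.e.-equivalence class of `ω ↦ |f ω| ^ p` (real power). -/
noncomputable def absRpow (p : ℝ) (f : Ω →ₘ[μ] ℝ) : Ω →ₘ[μ] ℝ :=
  AEEqFun.mk (fun ω => |f ω| ^ p)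
    (((by measurability : Measurable fun x : ℝ => |x| ^ p).comp_aemeasurable
      f.aemeasurable).aestronglyMeasurable)

/-- A (not necessarily complete) normed function space: the data of a carrier and a norm.
Used to speak about `p`-convexifications without re-proving all the axioms. -/
structure FunctionSpace (Ω : Type*) [MeasurableSpace Ω] (μ : MeasureTheory.Measure Ω) where
  carrier : Set (Ω →ₘ[μ] ℝ)
  norm : (Ω →ₘ[μ] ℝ) → ℝ

/-- The carrier-and-norm data underlying a Banach function lattice. -/
def BanachFunctionLattice.toFunctionSpace (X : BanachFunctionLattice Ω μ) :
    FunctionSpace Ω μ := ⟨X.carrier, X.norm⟩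

/-- The `p`-convexification `X^(p)`: all `f` with `|f|^p ∈ X`, with norm `‖|f|^p‖_X^(1/p)`. -/
noncomputable def pConv (X : BanachFunctionLattice Ω μ) (p : ℝ) : FunctionSpace Ω μ where
  carrier := {f | absRpow p f ∈ X.carrier}
  norm := fun f => (X.norm (absRpow p f)) ^ (1 / p)

/-- The sum space `X₀ + X₁` (as a set). -/
def sumSet (A₀ A₁ : FunctionSpace Ω μ) : Set (Ω →ₘ[μ] ℝ) :=
  {f | ∃ a₀ ∈ A₀.carrier, ∃ a₁ ∈ A₁.carrier, f = a₀ + a₁}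

/-- The Peetre `K`-functional `K(t, f; A₀, A₁)`. -/
noncomputable def Kfun (A₀ A₁ : FunctionSpace Ω μ) (t : ℝ) (f : Ω →ₘ[μ] ℝ) : ℝ :=
  sInf {r | ∃ a₀ ∈ A₀.carrier, ∃ a₁ ∈ A₁.carrier,
    f = a₀ + a₁ ∧ r = A₀.norm a₀ + t * A₁.norm a₁}

/-- The norm of the sum space `X₀ + X₁`, namely `K(1, ·)`. -/
noncomputable def sumNorm (A₀ A₁ : FunctionSpace Ω μ) (f : Ω →ₘ[μ] ℝ) : ℝ :=
  Kfun A₀ A₁ 1 f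

/-- The functional `D(t, f; A₀, A₁)`, the analogue of the `K`-functional restricted to
disjointly supported decompositions. -/
noncomputable def Dfun (A₀ A₁ : FunctionSpace Ω μ) (t : ℝ) (f : Ω →ₘ[μ] ℝ) : ℝ :=
  sInf {r | ∃ a₀ ∈ A₀.carrier, ∃ a₁ ∈ A₁.carrier,
    f = a₀ + a₁ ∧ a₀ * a₁ = 0 ∧ r = A₀.norm a₀ + t * A₁.norm a₁}

/-- `T : (A₀, A₁) → (A₀, A₁)` is a bounded linear operator: `T` is linear on `A₀ + A₁`
and its restriction to each `Aⱼ` is a bounded operator from `Aⱼ` into itself. -/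
def IsBoundedCoupleOperator (A₀ A₁ : FunctionSpace Ω μ) (T : (Ω →ₘ[μ] ℝ) → (Ω →ₘ[μ] ℝ)) :
    Prop :=
  (∀ f ∈ sumSet A₀ A₁, ∀ g ∈ sumSet A₀ A₁, T (f + g) = T f + T g) ∧
  (∀ (c : ℝ), ∀ f ∈ sumSet A₀ A₁, T (c • f) = c • T f) ∧
  (∀ f ∈ A₀.carrier, T f ∈ A₀.carrier) ∧
  (∀ f ∈ A₁.carrier, T f ∈ A₁.carrier) ∧
  (∃ C₀ : ℝ, ∀ f ∈ A₀.carrier, A₀.norm (T f) ≤ C₀ * A₀.norm f) ∧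
  (∃ C₁ : ℝ, ∀ f ∈ A₁.carrier, A₁.norm (T f) ≤ C₁ * A₁.norm f)

/-- `‖T‖_{Aⱼ → Aⱼ} ≤ C` for `j = 0, 1`. -/
def CoupleOperatorNormLE (A₀ A₁ : FunctionSpace Ω μ) (T : (Ω →ₘ[μ] ℝ) → (Ω →ₘ[μ] ℝ))
    (C : ℝ) : Prop :=
  (∀ f ∈ A₀.carrier, A₀.norm (T f) ≤ C * A₀.norm f) ∧
  (∀ f ∈ A₁.carrier, A₁.norm (T f) ≤ C * A₁.norm f)

/-- `T` is a positive operator on `A₀ + A₁`. -/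
def IsPositiveOn (A₀ A₁ : FunctionSpace Ω μ) (T : (Ω →ₘ[μ] ℝ) → (Ω →ₘ[μ] ℝ)) : Prop :=
  ∀ h ∈ sumSet A₀ A₁, 0 ≤ h → 0 ≤ T h

/-- `(A₀, A₁)` is a Calderón couple. -/
def IsCalderonCouple (A₀ A₁ : FunctionSpace Ω μ) : Prop :=
  ∀ f ∈ sumSet A₀ A₁, ∀ g ∈ sumSet A₀ A₁,
    (∀ t > 0, Kfun A₀ A₁ t g ≤ Kfun A₀ A₁ t f) →
    ∃ T, IsBoundedCoupleOperator A₀ A₁ T ∧ T f = g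

/-- `(A₀, A₁)` is a `C`-Calderón couple. -/
def IsCCalderonCouple (A₀ A₁ : FunctionSpace Ω μ) (C : ℝ) : Prop :=
  ∀ f ∈ sumSet A₀ A₁, ∀ g ∈ sumSet A₀ A₁,
    (∀ t > 0, Kfun A₀ A₁ t g ≤ Kfun A₀ A₁ t f) →
    ∃ T, IsBoundedCoupleOperator A₀ A₁ T ∧ T f = g ∧ CoupleOperatorNormLE A₀ A₁ T C

/-- `(A₀, A₁)` is a positive Calderón couple. -/
def IsPositiveCalderonCouple (A₀ A₁ : FunctionSpace Ω μ) : Prop :=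
  ∀ f ∈ sumSet A₀ A₁, ∀ g ∈ sumSet A₀ A₁, 0 ≤ f → 0 ≤ g →
    (∀ t > 0, Kfun A₀ A₁ t g ≤ Kfun A₀ A₁ t f) →
    ∃ T, IsBoundedCoupleOperator A₀ A₁ T ∧ IsPositiveOn A₀ A₁ T ∧ T f = g

/-- `(A₀, A₁)` is a positive `C`-Calderón couple. -/
def IsPositiveCCalderonCouple (A₀ A₁ : FunctionSpace Ω μ) (C : ℝ) : Prop :=
  ∀ f ∈ sumSet A₀ A₁, ∀ g ∈ sumSet A₀ A₁, 0 ≤ f → 0 ≤ g →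
    (∀ t > 0, Kfun A₀ A₁ t g ≤ Kfun A₀ A₁ t f) →
    ∃ T, IsBoundedCoupleOperator A₀ A₁ T ∧ IsPositiveOn A₀ A₁ T ∧ T f = g ∧
      CoupleOperatorNormLE A₀ A₁ T C

/-- A set `S` of (classes of) measurable functions has the Least Upper Bound Property:
every nonempty subset of `S` bounded above by an element of `S` has a least upper bound
in `S` (for the a.e. pointwise order). -/
def HasLUBP (S : Set (Ω →ₘ[μ] ℝ)) : Prop :=
  ∀ A ⊆ S, A.Nonempty → (∃ b ∈ S, ∀ a ∈ A, a ≤ b) →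
    ∃ y ∈ S, (∀ a ∈ A, a ≤ y) ∧ ∀ z ∈ S, (∀ a ∈ A, a ≤ z) → y ≤ z


/-! ### Auxiliary lemmas -/

section CalderonAux

open Filter

/- Real-number lemmas -/

private lemma CA_convex_split {p : ℝ} (hp : 1 ≤ p) {θ x y : ℝ} (hθ : 0 < θ) (hθ1 : θ < 1)
    (hx : 0 ≤ x) (hy : 0 ≤ y) :
    (x + y) ^ p ≤ θ ^ (1 - p) * x ^ p + (1 - θ) ^ (1 - p) * y ^ p := by
  have h1θ : 0 < 1 - θ := by linarith
  have h := (convexOn_rpow hp).2 (Set.mem_Ici.2 (div_nonneg hx hθ.le))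
    (Set.mem_Ici.2 (div_nonneg hy h1θ.le)) hθ.le h1θ.le (by ring)
  simp only [smul_eq_mul] at h
  have e0 : θ * (x / θ) + (1 - θ) * (y / (1 - θ)) = x + y := by field_simp
  rw [e0] at h
  have e1 : θ * (x / θ) ^ p = θ ^ (1 - p) * x ^ p := by
    rw [Real.div_rpow hx hθ.le, Real.rpow_sub hθ, Real.rpow_one]; ring
  have e2 : (1 - θ) * (y / (1 - θ)) ^ p = (1 - θ) ^ (1 - p) * y ^ p := by
    rw [Real.div_rpow hy h1θ.le, Real.rpow_sub h1θ, Real.rpow_one]; ring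
  rw [e1, e2] at h; exact h

private lemma CA_half {p : ℝ} : ((1:ℝ)/2) ^ (1 - p) = 2 ^ (p - 1) := by
  rw [one_div, Real.inv_rpow (by norm_num : (0:ℝ) ≤ 2),
    ← Real.rpow_neg (by norm_num : (0:ℝ) ≤ 2), neg_sub]

private lemma CA_two_split {p : ℝ} (hp : 1 < p) {x y : ℝ} (hx : 0 ≤ x) (hy : 0 ≤ y) :
    (x + y) ^ p ≤ 2 ^ (p-1) * x ^ p + 2 ^ (p-1) * y ^ p := by
  have h := CA_convex_split hp.le (θ := 1/2) (by norm_num) (by norm_num) hx hy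
  rw [show (1:ℝ) - 1/2 = 1/2 by norm_num] at h
  rw [CA_half] at h
  exact h

private lemma CA_powMean {p : ℝ} (hp : 1 < p) {u v : ℝ} (hu : 0 ≤ u) (hv : 0 ≤ v) :
    u ^ (1/p) + v ^ (1/p) ≤ 2 ^ (1 - 1/p) * (u + v) ^ (1/p) := by
  have hp0 : 0 < p := lt_trans one_pos hp
  have key : (u ^ (1/p) + v ^ (1/p)) ^ p ≤ 2 ^ (p - 1) * (u + v) := by
    have h := CA_two_split hp (Real.rpow_nonneg hu (1/p)) (Real.rpow_nonneg hv (1/p))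
    have eu : (u ^ (1/p)) ^ p = u := by
      rw [← Real.rpow_mul hu, one_div, inv_mul_cancel₀ hp0.ne', Real.rpow_one]
    have ev : (v ^ (1/p)) ^ p = v := by
      rw [← Real.rpow_mul hv, one_div, inv_mul_cancel₀ hp0.ne', Real.rpow_one]
    rw [eu, ev] at h
    calc (u ^ (1/p) + v ^ (1/p)) ^ p ≤ 2 ^ (p-1) * u + 2 ^ (p-1) * v := h
    _ = 2 ^ (p-1) * (u + v) := by ring
  have lhs0 : 0 ≤ u ^ (1/p) + v ^ (1/p) := by positivity
  have e2 : ((2:ℝ) ^ (p-1)) ^ (1/p) = 2 ^ (1 - 1/p) := by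
    rw [← Real.rpow_mul (by norm_num : (0:ℝ) ≤ 2)]
    congr 1
    field_simp
  have := Real.rpow_le_rpow (by positivity) key (by positivity : (0:ℝ) ≤ 1/p)
  rwa [← Real.rpow_mul lhs0, mul_one_div, div_self hp0.ne', Real.rpow_one,
    Real.mul_rpow (by positivity) (by linarith : (0:ℝ) ≤ u + v), e2] at this

private lemma CA_young {p q : ℝ} (hpq : p.HolderConjugate q) {x y : ℝ} (hx : 0 ≤ x) (hy : 0 ≤ y)
    {l : ℝ} (hl : 0 < l) : x * y ≤ l ^ p * x ^ p / p + y ^ q / (q * l ^ q) := by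
  have h := Real.young_inequality_of_nonneg (mul_nonneg hl.le hx) (div_nonneg hy hl.le) hpq
  rw [show l * x * (y / l) = x * y by field_simp] at h
  rw [Real.mul_rpow hl.le hx, Real.div_rpow hy hl.le] at h
  calc x * y ≤ l ^ p * x ^ p / p + y ^ q / l ^ q / q := h
    _ = l ^ p * x ^ p / p + y ^ q / (q * l ^ q) := by ring

private lemma CA_opt_val {p q : ℝ} (hpq : p.HolderConjugate q) {A B : ℝ} (hA : 0 < A) (hB : 0 < B) :
    ((B/A) ^ (1/(p+q))) ^ p * A / p + B / (q * ((B/A) ^ (1/(p+q))) ^ q)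
      = A ^ (1/p) * B ^ (1/q) := by
  have hp : 0 < p := hpq.pos
  have hq : 0 < q := hpq.symm.pos
  have hBA : 0 < B / A := div_pos hB hA
  have e1 : ((B/A) ^ (1/(p+q))) ^ p = B ^ (1/q) / A ^ (1/q) := by
    rw [← Real.rpow_mul hBA.le, show 1/(p+q) * p = 1/q by
      rw [← hpq.mul_eq_add]; field_simp, Real.div_rpow hB.le hA.le]
  have e2 : ((B/A) ^ (1/(p+q))) ^ q = B ^ (1/p) / A ^ (1/p) := by
    rw [← Real.rpow_mul hBA.le, show 1/(p+q) * q = 1/p by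
      rw [← hpq.mul_eq_add]; field_simp, Real.div_rpow hB.le hA.le]
  have hA1 : (0:ℝ) < A ^ (1/p) := Real.rpow_pos_of_pos hA _
  have hA2 : (0:ℝ) < A ^ (1/q) := Real.rpow_pos_of_pos hA _
  have hB1 : (0:ℝ) < B ^ (1/p) := Real.rpow_pos_of_pos hB _
  have hB2 : (0:ℝ) < B ^ (1/q) := Real.rpow_pos_of_pos hB _
  have dA : A ^ (1/p) = A / A ^ (1/q) := by
    rw [show (1:ℝ)/p = 1 - 1/q by
      rw [one_div, one_div]; linarith [hpq.inv_add_inv_eq_one],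
      Real.rpow_sub hA, Real.rpow_one]
  have dB : B ^ (1/q) = B / B ^ (1/p) := by
    rw [show (1:ℝ)/q = 1 - 1/p by
      rw [one_div, one_div]; linarith [hpq.inv_add_inv_eq_one],
      Real.rpow_sub hB, Real.rpow_one]
  rw [e1, e2]
  have t1 : B ^ (1/q) / A ^ (1/q) * A / p = A ^ (1/p) * B ^ (1/q) / p := by
    rw [dA]; field_simp
  have t2 : B / (q * (B ^ (1/p) / A ^ (1/p))) = A ^ (1/p) * B ^ (1/q) / q := by
    rw [dB]; field_simp
  rw [t1, t2, div_add_div _ _ hp.ne' hq.ne', hpq.mul_eq_add,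
    div_eq_iff (by positivity : p + q ≠ 0)]
  ring

private lemma CA_opt {p q : ℝ} (hpq : p.HolderConjugate q) {a b c : ℝ} (ha : 0 ≤ a) (hb : 0 ≤ b)
    (H : ∀ l : ℚ, 0 < l → c ≤ (l:ℝ) ^ p * a / p + b / (q * (l:ℝ) ^ q)) :
    c ≤ a ^ (1/p) * b ^ (1/q) := by
  have hp : 0 < p := hpq.pos
  have hq : 0 < q := hpq.symm.pos
  have main : ∀ δ : ℝ, 0 < δ → c ≤ (a+δ) ^ (1/p) * (b+δ) ^ (1/q) := by
    intro δ hδ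
    have hA : 0 < a + δ := by linarith
    have hB : 0 < b + δ := by linarith
    set L : ℝ := ((b+δ)/(a+δ)) ^ (1/(p+q)) with hLdef
    have hL0 : 0 < L := Real.rpow_pos_of_pos (div_pos hB hA) _
    have hLq : 0 < q * L ^ q := mul_pos hq (Real.rpow_pos_of_pos hL0 _)
    have step : ∀ η : ℝ, 0 < η → c ≤ (L+η) ^ p * (a+δ) / p + (b+δ) / (q * L ^ q) := by
      intro η hη
      obtain ⟨l, hl1, hl2⟩ := exists_rat_btwn (show L < L + η by linarith)
      have hl0 : 0 < (l:ℝ) := lt_trans hL0 hl1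
      have hlq : (0:ℚ) < l := by exact_mod_cast hl0
      refine le_trans (H l hlq) (add_le_add ?_ ?_)
      · apply div_le_div_of_nonneg_right ?_ hp.le
        exact mul_le_mul (Real.rpow_le_rpow hl0.le hl2.le hpq.nonneg) (by linarith) ha
          (by positivity)
      · apply div_le_div₀ (by linarith : (0:ℝ) ≤ b + δ) (by linarith) hLq
        exact mul_le_mul_of_nonneg_left (Real.rpow_le_rpow hL0.le hl1.le hq.le) hq.le
    have F0 : ((L + 0) ^ p * (a+δ) / p + (b+δ) / (q * L ^ q))
        = (a+δ) ^ (1/p) * (b+δ) ^ (1/q) := by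
      rw [add_zero]; exact CA_opt_val hpq hA hB
    have cont : ContinuousAt (fun η : ℝ => (L+η) ^ p * (a+δ) / p + (b+δ) / (q * L ^ q)) 0 := by
      have c1 : ContinuousAt (fun η : ℝ => L + η) 0 := by fun_prop
      have c2 : ContinuousAt (fun x : ℝ => x ^ p) (L + 0) :=
        Real.continuousAt_rpow_const _ _ (Or.inl (by positivity))
      exact (((c2.comp c1).mul continuousAt_const).div_const p).add continuousAt_const
    have tend : Tendsto (fun η : ℝ => (L+η) ^ p * (a+δ) / p + (b+δ) / (q * L ^ q))
        (nhdsWithin 0 (Set.Ioi 0)) (nhds ((a+δ) ^ (1/p) * (b+δ) ^ (1/q))) := by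
      rw [← F0]
      exact (cont.tendsto).mono_left nhdsWithin_le_nhds
    exact ge_of_tendsto tend (eventually_nhdsWithin_of_forall fun η hη => step η hη)
  have cont2 : ContinuousAt (fun δ : ℝ => (a+δ) ^ (1/p) * (b+δ) ^ (1/q)) 0 := by
    have c1 : ContinuousAt (fun δ : ℝ => a + δ) 0 := by fun_prop
    have c1' : ContinuousAt (fun δ : ℝ => b + δ) 0 := by fun_prop
    have c2 : ContinuousAt (fun x : ℝ => x ^ (1/p)) (a + 0) :=
      Real.continuousAt_rpow_const _ _ (Or.inr (by positivity))
    have c3 : ContinuousAt (fun x : ℝ => x ^ (1/q)) (b + 0) :=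
      Real.continuousAt_rpow_const _ _ (Or.inr (by positivity))
    exact (c2.comp c1).mul (c3.comp c1')
  have tend2 : Tendsto (fun δ : ℝ => (a+δ) ^ (1/p) * (b+δ) ^ (1/q))
      (nhdsWithin 0 (Set.Ioi 0)) (nhds (a ^ (1/p) * b ^ (1/q))) := by
    have e : ((a + 0) ^ (1/p) * (b + 0) ^ (1/q)) = a ^ (1/p) * b ^ (1/q) := by
      rw [add_zero, add_zero]
    rw [← e]
    exact (cont2.tendsto).mono_left nhdsWithin_le_nhds
  exact ge_of_tendsto tend2 (eventually_nhdsWithin_of_forall fun δ hδ => main δ hδ)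

private lemma CA_clamp {v w0 w1 : ℝ} (h : |v| ≤ |w0| + |w1|) :
    |max (-|w0|) (min v |w0|)| ≤ |w0| ∧ |v - max (-|w0|) (min v |w0|)| ≤ |w1| := by
  have h0 : (0:ℝ) ≤ |w0| := abs_nonneg _
  have h1 : (0:ℝ) ≤ |w1| := abs_nonneg _
  have hv1 : -(|w0| + |w1|) ≤ v := neg_le_of_abs_le h
  have hv2 : v ≤ |w0| + |w1| := le_of_abs_le h
  rcases le_total v (-|w0|) with hc | hc
  · rw [min_eq_left (le_trans hc (by linarith)), max_eq_left hc]
    constructor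
    · rw [abs_neg, abs_abs]
    · rw [abs_le]; constructor <;> linarith
  · rcases le_total v |w0| with hd | hd
    · rw [min_eq_left hd, max_eq_right hc]
      constructor
      · rw [abs_le]; constructor <;> linarith
      · simpa using h1
    · rw [min_eq_right hd, max_eq_right (by linarith)]
      constructor
      · rw [abs_abs]
      · rw [abs_le]; constructor <;> linarith

private lemma CA_trunc {c t0 t1 : ℝ} (hc : 0 ≤ c) (he : c = t0 + t1) :
    0 ≤ max 0 (min c t0) ∧ max 0 (min c t0) ≤ |t0| ∧ max 0 (min c t0) ≤ c ∧
      0 ≤ c - max 0 (min c t0) ∧ c - max 0 (min c t0) ≤ |t1| := by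
  rcases le_total t0 0 with h | h
  · rw [max_eq_left (le_trans (min_le_right _ _) h)]
    refine ⟨le_rfl, abs_nonneg _, hc, by simpa using hc, ?_⟩
    have : t1 ≤ |t1| := le_abs_self _
    linarith
  · rcases le_total t0 c with hd | hd
    · rw [min_eq_right hd, max_eq_right h]
      have : t1 ≤ |t1| := le_abs_self _
      have : t0 ≤ |t0| := le_abs_self _
      refine ⟨h, le_abs_self _, hd, by linarith, ?_⟩
      have : t1 ≤ |t1| := le_abs_self _
      linarith
    · rw [min_eq_left hd, max_eq_right hc]
      refine ⟨hc, le_trans hd (le_abs_self _), le_rfl, by linarith, ?_⟩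
      have : (0:ℝ) ≤ |t1| := abs_nonneg _
      linarith

private lemma CA_theta_point {p : ℝ} (hp : 1 < p) {F B0 B1 : ℝ} (hB0 : 0 ≤ B0) (hB1 : 0 ≤ B1)
    (he : |F| ^ p = B0 + B1) :
    |F * (B0/(B0+B1))| ^ p ≤ B0 ∧ |F - F * (B0/(B0+B1))| ^ p ≤ B1 := by
  have hp0 : p ≠ 0 := by positivity
  rcases eq_or_lt_of_le (add_nonneg hB0 hB1) with hs | hs
  · -- B0 + B1 = 0
    have hB0' : B0 = 0 := by linarith [abs_nonneg F]
    have hB1' : B1 = 0 := by linarith [abs_nonneg F]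
    have hF : F = 0 := by
      have : |F| ^ p = 0 := by rw [he, ← hs]
      have := (Real.rpow_eq_zero_iff_of_nonneg (abs_nonneg F)).mp this
      exact abs_eq_zero.mp this.1
    subst hF
    simp only [zero_mul, zero_sub, abs_neg, abs_zero, mul_zero, sub_zero]
    rw [Real.zero_rpow hp0]
    exact ⟨le_of_eq hB0'.symm, le_of_eq hB1'.symm⟩
  · set s := B0 + B1 with hsdef
    have hθ0 : 0 ≤ B0 / s := div_nonneg hB0 hs.le
    have hθ1 : B0 / s ≤ 1 := by
      rw [div_le_one hs]; linarith
    have habs : |F * (B0/s)| ^ p = |F| ^ p * (B0/s) ^ p := by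
      rw [abs_mul, abs_of_nonneg hθ0, Real.mul_rpow (abs_nonneg F) hθ0]
    have hθp : (B0/s) ^ p ≤ B0/s := by
      rcases eq_or_lt_of_le hθ0 with h | h
      · rw [← h, Real.zero_rpow hp0]
      · calc (B0/s) ^ p ≤ (B0/s) ^ (1:ℝ) :=
            Real.rpow_le_rpow_of_exponent_ge h hθ1 hp.le
          _ = B0/s := Real.rpow_one _
    have habs2 : |F - F * (B0/s)| ^ p = |F| ^ p * (B1/s) ^ p := by
      rw [show F - F * (B0/s) = F * (B1/s) by field_simp; ring]
      rw [abs_mul, abs_of_nonneg (div_nonneg hB1 hs.le),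
        Real.mul_rpow (abs_nonneg F) (div_nonneg hB1 hs.le)]
    have hθ1' : B1 / s ≤ 1 := by rw [div_le_one hs]; linarith
    have hθp' : (B1/s) ^ p ≤ B1/s := by
      rcases eq_or_lt_of_le (div_nonneg hB1 hs.le) with h | h
      · rw [← h, Real.zero_rpow hp0]
      · calc (B1/s) ^ p ≤ (B1/s) ^ (1:ℝ) :=
            Real.rpow_le_rpow_of_exponent_ge h hθ1' hp.le
          _ = B1/s := Real.rpow_one _
    constructor
    · calc |F * (B0/s)| ^ p = |F| ^ p * (B0/s) ^ p := habs
        _ ≤ |F| ^ p * (B0/s) := by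
            apply mul_le_mul_of_nonneg_left hθp (Real.rpow_nonneg (abs_nonneg F) p)
        _ = s * (B0/s) := by rw [he]
        _ = B0 := by field_simp
    · calc |F - F * (B0/s)| ^ p = |F| ^ p * (B1/s) ^ p := habs2
        _ ≤ |F| ^ p * (B1/s) := by
            apply mul_le_mul_of_nonneg_left hθp' (Real.rpow_nonneg (abs_nonneg F) p)
        _ = s * (B1/s) := by rw [he]
        _ = B1 := by field_simp

private lemma CA_theta_calc {p : ℝ} {X Y : ℝ} (hX : 0 < X) (hY : 0 < Y) :
    (X/(X+Y)) ^ (1-p) * X ^ p + (Y/(X+Y)) ^ (1-p) * Y ^ p = (X+Y) ^ p := by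
  have hXY : 0 < X + Y := by linarith
  have hiXY : ((X+Y) ^ (1-p)) ≠ 0 := (Real.rpow_pos_of_pos hXY _).ne'
  have key : ∀ Z : ℝ, 0 < Z → (Z/(X+Y)) ^ (1-p) * Z ^ p = Z * ((X+Y) ^ (p-1)) := by
    intro Z hZ
    rw [Real.div_rpow hZ.le hXY.le, div_mul_eq_mul_div, ← Real.rpow_add hZ,
      show 1 - p + p = 1 by ring, Real.rpow_one]
    rw [div_eq_iff hiXY, mul_assoc, ← Real.rpow_add hXY, show p - 1 + (1-p) = 0 by ring,
      Real.rpow_zero, mul_one]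
  rw [key X hX, key Y hY, ← add_mul]
  nth_rewrite 1 [← Real.rpow_one (X+Y)]
  rw [← Real.rpow_add hXY]
  norm_num

/- `AEEqFun`-level lemmas -/

private lemma CA_ae_le {f g : Ω →ₘ[μ] ℝ} (h : ∀ᵐ ω ∂μ, f ω ≤ g ω) : f ≤ g :=
  AEEqFun.coeFn_le.mp h

private lemma CA_le_ae {f g : Ω →ₘ[μ] ℝ} (h : f ≤ g) : ∀ᵐ ω ∂μ, f ω ≤ g ω :=
  AEEqFun.coeFn_le.mpr h

private lemma CA_abs_le {f g : Ω →ₘ[μ] ℝ} (h : ∀ᵐ ω ∂μ, |g ω| ≤ |f ω|) : |g| ≤ |f| := by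
  rw [← AEEqFun.coeFn_le]
  filter_upwards [AEEqFun.coeFn_abs g, AEEqFun.coeFn_abs f, h] with ω h1 h2 h3
  rw [h1, h2]; exact h3

private lemma CA_mem_norm {X : BanachFunctionLattice Ω μ} {b : Ω →ₘ[μ] ℝ} (hb : b ∈ X.carrier)
    {c : Ω →ₘ[μ] ℝ} (h : ∀ᵐ ω ∂μ, |c ω| ≤ |b ω|) : c ∈ X.carrier ∧ X.norm c ≤ X.norm b :=
  ⟨X.ideal_mem b hb c (CA_abs_le h), X.ideal_norm_le b hb c (CA_abs_le h)⟩

private lemma CA_absRpow_ae (p : ℝ) (f : Ω →ₘ[μ] ℝ) :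
    ∀ᵐ ω ∂μ, (absRpow p f) ω = |f ω| ^ p := AEEqFun.coeFn_mk _ _

private lemma CA_zero_ae : ∀ᵐ ω ∂μ, (0 : Ω →ₘ[μ] ℝ) ω = 0 := AEEqFun.coeFn_zero

/- Kfun basics -/

private lemma CA_K_bddBelow {A₀ A₁ : FunctionSpace Ω μ}
    (h₀ : ∀ a ∈ A₀.carrier, 0 ≤ A₀.norm a) (h₁ : ∀ a ∈ A₁.carrier, 0 ≤ A₁.norm a)
    {t : ℝ} (ht : 0 ≤ t) (f : Ω →ₘ[μ] ℝ) :
    BddBelow {r | ∃ a₀ ∈ A₀.carrier, ∃ a₁ ∈ A₁.carrier,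
      f = a₀ + a₁ ∧ r = A₀.norm a₀ + t * A₁.norm a₁} := by
  refine ⟨0, ?_⟩
  rintro r ⟨a₀, ha₀, a₁, ha₁, -, rfl⟩
  exact add_nonneg (h₀ a₀ ha₀) (mul_nonneg ht (h₁ a₁ ha₁))

private lemma CA_K_nonneg {A₀ A₁ : FunctionSpace Ω μ}
    (h₀ : ∀ a ∈ A₀.carrier, 0 ≤ A₀.norm a) (h₁ : ∀ a ∈ A₁.carrier, 0 ≤ A₁.norm a)
    {t : ℝ} (ht : 0 ≤ t) (f : Ω →ₘ[μ] ℝ) : 0 ≤ Kfun A₀ A₁ t f := by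
  apply Real.sInf_nonneg
  rintro r ⟨a₀, ha₀, a₁, ha₁, -, rfl⟩
  exact add_nonneg (h₀ a₀ ha₀) (mul_nonneg ht (h₁ a₁ ha₁))

private lemma CA_K_le {A₀ A₁ : FunctionSpace Ω μ}
    (h₀ : ∀ a ∈ A₀.carrier, 0 ≤ A₀.norm a) (h₁ : ∀ a ∈ A₁.carrier, 0 ≤ A₁.norm a)
    {t : ℝ} (ht : 0 ≤ t) {a₀ a₁ f : Ω →ₘ[μ] ℝ}
    (ha₀ : a₀ ∈ A₀.carrier) (ha₁ : a₁ ∈ A₁.carrier) (hf : f = a₀ + a₁) :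
    Kfun A₀ A₁ t f ≤ A₀.norm a₀ + t * A₁.norm a₁ :=
  csInf_le (CA_K_bddBelow h₀ h₁ ht f) ⟨a₀, ha₀, a₁, ha₁, hf, rfl⟩

private lemma CA_le_K {A₀ A₁ : FunctionSpace Ω μ} {t c : ℝ} {f : Ω →ₘ[μ] ℝ}
    (hf : f ∈ sumSet A₀ A₁)
    (h : ∀ a₀ ∈ A₀.carrier, ∀ a₁ ∈ A₁.carrier, f = a₀ + a₁ →
      c ≤ A₀.norm a₀ + t * A₁.norm a₁) :
    c ≤ Kfun A₀ A₁ t f := by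
  obtain ⟨a₀, ha₀, a₁, ha₁, hsum⟩ := hf
  refine le_csInf ⟨A₀.norm a₀ + t * A₁.norm a₁, a₀, ha₀, a₁, ha₁, hsum, rfl⟩ ?_
  rintro r ⟨b₀, hb₀, b₁, hb₁, hs, rfl⟩
  exact h b₀ hb₀ b₁ hb₁ hs

private lemma CA_pConvNorm_nonneg (X : BanachFunctionLattice Ω μ) (p : ℝ) :
    ∀ a ∈ (pConv X p).carrier, 0 ≤ (pConv X p).norm a := fun a ha =>
  Real.rpow_nonneg (X.norm_nonneg _ ha) _

end CalderonAux

section CalderonAux2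

open Filter

variable {X₀ X₁ : BanachFunctionLattice Ω μ}

private lemma CA_sum_add {v w : Ω →ₘ[μ] ℝ}
    (hv : v ∈ sumSet X₀.toFunctionSpace X₁.toFunctionSpace)
    (hw : w ∈ sumSet X₀.toFunctionSpace X₁.toFunctionSpace) :
    v + w ∈ sumSet X₀.toFunctionSpace X₁.toFunctionSpace := by
  obtain ⟨a₀, ha₀, a₁, ha₁, rfl⟩ := hv
  obtain ⟨b₀, hb₀, b₁, hb₁, rfl⟩ := hw
  exact ⟨a₀ + b₀, X₀.add_mem ha₀ hb₀, a₁ + b₁, X₁.add_mem ha₁ hb₁, by abel⟩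

private lemma CA_sum_smul (c : ℝ) {v : Ω →ₘ[μ] ℝ}
    (hv : v ∈ sumSet X₀.toFunctionSpace X₁.toFunctionSpace) :
    c • v ∈ sumSet X₀.toFunctionSpace X₁.toFunctionSpace := by
  obtain ⟨a₀, ha₀, a₁, ha₁, rfl⟩ := hv
  exact ⟨c • a₀, X₀.smul_mem c ha₀, c • a₁, X₁.smul_mem c ha₁, by rw [smul_add]⟩

private lemma CA_sum_ideal {v w : Ω →ₘ[μ] ℝ}
    (hw : w ∈ sumSet X₀.toFunctionSpace X₁.toFunctionSpace)
    (h : ∀ᵐ ω ∂μ, |v ω| ≤ |w ω|) :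
    v ∈ sumSet X₀.toFunctionSpace X₁.toFunctionSpace := by
  obtain ⟨w₀, hw₀, w₁, hw₁, rfl⟩ := hw
  have hcae : ∀ᵐ ω ∂μ, ((-|w₀|) ⊔ (v ⊓ |w₀|)) ω = max (-|w₀ ω|) (min (v ω) |w₀ ω|) := by
    filter_upwards [AEEqFun.coeFn_sup (-|w₀|) (v ⊓ |w₀|), AEEqFun.coeFn_inf v |w₀|,
      AEEqFun.coeFn_abs w₀, AEEqFun.coeFn_neg |w₀|] with ω e1 e2 e3 e4
    have e4' : (-|w₀|) ω = -(|w₀| ω) := e4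
    have e3' : |w₀| ω = |w₀ ω| := e3
    have e2' : (v ⊓ |w₀|) ω = min (v ω) (|w₀| ω) := e2
    rw [e1]
    show ((-|w₀|) ω) ⊔ ((v ⊓ |w₀|) ω) = _
    rw [e4', e2', e3']
  have hboth : ∀ᵐ ω ∂μ, |((-|w₀|) ⊔ (v ⊓ |w₀|)) ω| ≤ |w₀ ω| ∧
      |v ω - ((-|w₀|) ⊔ (v ⊓ |w₀|)) ω| ≤ |w₁ ω| := by
    filter_upwards [hcae, h, AEEqFun.coeFn_add w₀ w₁] with ω e1 e2 e3
    have e3' : (w₀ + w₁) ω = w₀ ω + w₁ ω := e3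
    have hv : |v ω| ≤ |w₀ ω| + |w₁ ω| := by
      rw [e3'] at e2
      exact le_trans e2 (abs_add_le _ _)
    rw [e1]
    exact CA_clamp hv
  have m0 := CA_mem_norm (X := X₀) hw₀ (hboth.mono fun ω hh => hh.1)
  have k1 : ∀ᵐ ω ∂μ, |(v - ((-|w₀|) ⊔ (v ⊓ |w₀|))) ω| ≤ |w₁ ω| := by
    filter_upwards [hboth, AEEqFun.coeFn_sub v ((-|w₀|) ⊔ (v ⊓ |w₀|))] with ω e1 e2
    have e2' : (v - ((-|w₀|) ⊔ (v ⊓ |w₀|))) ω = v ω - ((-|w₀|) ⊔ (v ⊓ |w₀|)) ω := e2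
    rw [e2']
    exact e1.2
  have m1 := CA_mem_norm (X := X₁) hw₁ k1
  exact ⟨_, m0.1, _, m1.1, by abel⟩

private lemma CA_nn (X : BanachFunctionLattice Ω μ) :
    ∀ a ∈ X.toFunctionSpace.carrier, 0 ≤ X.toFunctionSpace.norm a := X.norm_nonneg

private lemma CA_split {c D₀ D₁ : Ω →ₘ[μ] ℝ}
    (hD₀ : D₀ ∈ X₀.carrier) (hD₁ : D₁ ∈ X₁.carrier)
    (hc : ∀ᵐ ω ∂μ, 0 ≤ c ω) (h0 : ∀ᵐ ω ∂μ, 0 ≤ D₀ ω) (h1 : ∀ᵐ ω ∂μ, 0 ≤ D₁ ω)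
    (hle : ∀ᵐ ω ∂μ, c ω ≤ D₀ ω + D₁ ω) :
    ∃ b₀ ∈ X₀.carrier, ∃ b₁ ∈ X₁.carrier, c = b₀ + b₁ ∧
      X₀.norm b₀ ≤ X₀.norm D₀ ∧ X₁.norm b₁ ≤ X₁.norm D₁ := by
  have hbae : ∀ᵐ ω ∂μ, (c ⊓ D₀) ω = min (c ω) (D₀ ω) := by
    filter_upwards [AEEqFun.coeFn_inf c D₀] with ω e
    rw [e]
  have k0 : ∀ᵐ ω ∂μ, |(c ⊓ D₀) ω| ≤ |D₀ ω| := by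
    filter_upwards [hbae, hc, h0] with ω e1 e2 e3
    rw [e1, abs_of_nonneg (le_min e2 e3), abs_of_nonneg e3]
    exact min_le_right _ _
  have k1 : ∀ᵐ ω ∂μ, |(c - c ⊓ D₀) ω| ≤ |D₁ ω| := by
    filter_upwards [hbae, hc, h0, h1, hle, AEEqFun.coeFn_sub c (c ⊓ D₀)]
      with ω e1 e2 e3 e4 e5 e6
    have e6' : (c - c ⊓ D₀) ω = c ω - (c ⊓ D₀) ω := e6
    rw [e6', e1]
    have l1 : 0 ≤ c ω - min (c ω) (D₀ ω) := sub_nonneg.2 (min_le_left _ _)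
    have l2 : c ω - min (c ω) (D₀ ω) ≤ D₁ ω := by
      rcases le_total (c ω) (D₀ ω) with hm | hm
      · rw [min_eq_left hm]; linarith
      · rw [min_eq_right hm]; linarith
    rw [abs_of_nonneg l1, abs_of_nonneg e4]
    exact l2
  have m0 := CA_mem_norm (X := X₀) hD₀ k0
  have m1 := CA_mem_norm (X := X₁) hD₁ k1
  exact ⟨_, m0.1, _, m1.1, by abel, m0.2, m1.2⟩

private lemma CA_absRpow_sum {p : ℝ} (hp : 1 < p) {h : Ω →ₘ[μ] ℝ}
    (hh : h ∈ sumSet (pConv X₀ p) (pConv X₁ p)) :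
    absRpow p h ∈ sumSet X₀.toFunctionSpace X₁.toFunctionSpace := by
  obtain ⟨a₀, ha₀, a₁, ha₁, rfl⟩ := hh
  have hc : ∀ᵐ ω ∂μ, 0 ≤ (absRpow p (a₀ + a₁)) ω := by
    filter_upwards [CA_absRpow_ae p (a₀ + a₁)] with ω e
    rw [e]; positivity
  have h0 : ∀ᵐ ω ∂μ, 0 ≤ ((2:ℝ)^(p-1) • absRpow p a₀) ω := by
    filter_upwards [AEEqFun.coeFn_smul ((2:ℝ)^(p-1)) (absRpow p a₀), CA_absRpow_ae p a₀]
      with ω e1 e2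
    have e1' : ((2:ℝ)^(p-1) • absRpow p a₀) ω = (2:ℝ)^(p-1) * (absRpow p a₀) ω := by
      rw [e1]; rfl
    rw [e1', e2]; positivity
  have h1 : ∀ᵐ ω ∂μ, 0 ≤ ((2:ℝ)^(p-1) • absRpow p a₁) ω := by
    filter_upwards [AEEqFun.coeFn_smul ((2:ℝ)^(p-1)) (absRpow p a₁), CA_absRpow_ae p a₁]
      with ω e1 e2
    have e1' : ((2:ℝ)^(p-1) • absRpow p a₁) ω = (2:ℝ)^(p-1) * (absRpow p a₁) ω := by
      rw [e1]; rfl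
    rw [e1', e2]; positivity
  have hle : ∀ᵐ ω ∂μ, (absRpow p (a₀ + a₁)) ω ≤
      ((2:ℝ)^(p-1) • absRpow p a₀) ω + ((2:ℝ)^(p-1) • absRpow p a₁) ω := by
    filter_upwards [CA_absRpow_ae p (a₀ + a₁), CA_absRpow_ae p a₀, CA_absRpow_ae p a₁,
      AEEqFun.coeFn_add a₀ a₁, AEEqFun.coeFn_smul ((2:ℝ)^(p-1)) (absRpow p a₀),
      AEEqFun.coeFn_smul ((2:ℝ)^(p-1)) (absRpow p a₁)] with ω e1 e2 e3 e4 e5 e6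
    have e4' : (a₀ + a₁) ω = a₀ ω + a₁ ω := e4
    have e5' : ((2:ℝ)^(p-1) • absRpow p a₀) ω = (2:ℝ)^(p-1) * (absRpow p a₀) ω := by
      rw [e5]; rfl
    have e6' : ((2:ℝ)^(p-1) • absRpow p a₁) ω = (2:ℝ)^(p-1) * (absRpow p a₁) ω := by
      rw [e6]; rfl
    rw [e1, e4', e5', e6', e2, e3]
    calc |a₀ ω + a₁ ω| ^ p ≤ (|a₀ ω| + |a₁ ω|) ^ p :=
        Real.rpow_le_rpow (abs_nonneg _) (abs_add_le _ _) (by positivity)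
      _ ≤ 2^(p-1) * |a₀ ω| ^ p + 2^(p-1) * |a₁ ω| ^ p :=
        CA_two_split hp (abs_nonneg _) (abs_nonneg _)
  obtain ⟨b₀, hb₀, b₁, hb₁, hsum, -, -⟩ := CA_split (X₀ := X₀) (X₁ := X₁)
    (X₀.smul_mem _ ha₀) (X₁.smul_mem _ ha₁) hc h0 h1 hle
  exact ⟨b₀, hb₀, b₁, hb₁, hsum⟩

private lemma CA_sum_zero :
    (0 : Ω →ₘ[μ] ℝ) ∈ sumSet X₀.toFunctionSpace X₁.toFunctionSpace :=
  ⟨0, X₀.zero_mem, 0, X₁.zero_mem, by simp⟩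

private lemma CA_S_abs {S : (Ω →ₘ[μ] ℝ) → (Ω →ₘ[μ] ℝ)}
    (HS : IsBoundedCoupleOperator X₀.toFunctionSpace X₁.toFunctionSpace S)
    (HP : IsPositiveOn X₀.toFunctionSpace X₁.toFunctionSpace S)
    {w V : Ω →ₘ[μ] ℝ} (hw : w ∈ sumSet X₀.toFunctionSpace X₁.toFunctionSpace)
    (hV : V ∈ sumSet X₀.toFunctionSpace X₁.toFunctionSpace)
    (h : ∀ᵐ ω ∂μ, |w ω| ≤ V ω) : ∀ᵐ ω ∂μ, |(S w) ω| ≤ (S V) ω := by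
  have hneg : -w ∈ sumSet X₀.toFunctionSpace X₁.toFunctionSpace := by
    have := CA_sum_smul (X₀ := X₀) (X₁ := X₁) (-1) hw
    rwa [neg_one_smul] at this
  have h1 : V - w ∈ sumSet X₀.toFunctionSpace X₁.toFunctionSpace := by
    have := CA_sum_add hV hneg
    rwa [← sub_eq_add_neg] at this
  have h2 : V + w ∈ sumSet X₀.toFunctionSpace X₁.toFunctionSpace := CA_sum_add hV hw
  have p1 : 0 ≤ S (V - w) := by
    apply HP _ h1
    apply CA_ae_le
    filter_upwards [h, AEEqFun.coeFn_sub V w, CA_zero_ae] with ω e1 e2 e3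
    have e2' : (V - w) ω = V ω - w ω := e2
    rw [e3, e2']
    have := neg_abs_le (w ω)
    have := le_abs_self (w ω)
    linarith
  have p2 : 0 ≤ S (V + w) := by
    apply HP _ h2
    apply CA_ae_le
    filter_upwards [h, AEEqFun.coeFn_add V w, CA_zero_ae] with ω e1 e2 e3
    have e2' : (V + w) ω = V ω + w ω := e2
    rw [e3, e2']
    have := neg_abs_le (w ω)
    linarith
  have e1 : S V - S w = S (V - w) := by
    have h' := HS.1 (V - w) h1 w hw
    rw [sub_add_cancel] at h'
    rw [h']; abel
  have e2 : S (V + w) = S V + S w := HS.1 V hV w hw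
  have p1' : 0 ≤ S V - S w := by rw [e1]; exact p1
  have p2' : 0 ≤ S V + S w := by rw [← e2]; exact p2
  have q1 : ∀ᵐ ω ∂μ, 0 ≤ (S V) ω - (S w) ω := by
    filter_upwards [CA_le_ae p1', AEEqFun.coeFn_sub (S V) (S w), CA_zero_ae] with ω e1 e2 e3
    have e2' : (S V - S w) ω = (S V) ω - (S w) ω := e2
    rw [e3, e2'] at e1
    exact e1
  have q2 : ∀ᵐ ω ∂μ, 0 ≤ (S V) ω + (S w) ω := by
    filter_upwards [CA_le_ae p2', AEEqFun.coeFn_add (S V) (S w), CA_zero_ae] with ω e1 e2 e3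
    have e2' : (S V + S w) ω = (S V) ω + (S w) ω := e2
    rw [e3, e2'] at e1
    exact e1
  filter_upwards [q1, q2] with ω f1 f2
  rw [abs_le]
  constructor <;> linarith

private lemma CA_K_smul_ge {c : ℝ} (hc : 0 < c) {Φ : Ω →ₘ[μ] ℝ}
    (hΦ : Φ ∈ sumSet X₀.toFunctionSpace X₁.toFunctionSpace) {t : ℝ} (ht : 0 ≤ t) :
    c * Kfun X₀.toFunctionSpace X₁.toFunctionSpace t Φ
      ≤ Kfun X₀.toFunctionSpace X₁.toFunctionSpace t (c • Φ) := by
  have hmem : c • Φ ∈ sumSet X₀.toFunctionSpace X₁.toFunctionSpace := CA_sum_smul c hΦ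
  apply CA_le_K hmem
  intro b₀ hb₀ b₁ hb₁ hsum
  have hΦeq : Φ = c⁻¹ • b₀ + c⁻¹ • b₁ := by
    have h' : Φ = c⁻¹ • (c • Φ) := by rw [smul_smul, inv_mul_cancel₀ hc.ne', one_smul]
    rw [h', hsum, smul_add]
  have hK := CA_K_le (CA_nn X₀) (CA_nn X₁) ht
    (X₀.smul_mem c⁻¹ hb₀) (X₁.smul_mem c⁻¹ hb₁) hΦeq
  have hK2 : Kfun X₀.toFunctionSpace X₁.toFunctionSpace t Φ
      ≤ X₀.norm (c⁻¹ • b₀) + t * X₁.norm (c⁻¹ • b₁) := hK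
  rw [X₀.norm_smul c⁻¹ b₀ hb₀, X₁.norm_smul c⁻¹ b₁ hb₁, abs_of_pos (inv_pos.2 hc)] at hK2
  calc c * Kfun X₀.toFunctionSpace X₁.toFunctionSpace t Φ
      ≤ c * (c⁻¹ * X₀.norm b₀ + t * (c⁻¹ * X₁.norm b₁)) :=
        mul_le_mul_of_nonneg_left hK2 hc.le
    _ = X₀.norm b₀ + t * X₁.norm b₁ := by field_simp


private lemma CA_K_lower {p : ℝ} (hp : 1 < p) {g : Ω →ₘ[μ] ℝ}
    (hg : g ∈ sumSet (pConv X₀ p) (pConv X₁ p)) {s : ℝ} (hs : 0 < s) :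
    Kfun X₀.toFunctionSpace X₁.toFunctionSpace s (absRpow p g)
      ≤ (Kfun (pConv X₀ p) (pConv X₁ p) (s ^ (1/p)) g) ^ p := by
  have hp0 : 0 < p := by positivity
  have hKX0 : 0 ≤ Kfun X₀.toFunctionSpace X₁.toFunctionSpace s (absRpow p g) :=
    CA_K_nonneg (CA_nn X₀) (CA_nn X₁) hs.le _
  have claim : (Kfun X₀.toFunctionSpace X₁.toFunctionSpace s (absRpow p g)) ^ (1/p)
      ≤ Kfun (pConv X₀ p) (pConv X₁ p) (s ^ (1/p)) g := by
    apply CA_le_K hg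
    intro a₀ ha₀ a₁ ha₁ hsum
    set N₀ := X₀.norm (absRpow p a₀) with hN₀def
    set N₁ := X₁.norm (absRpow p a₁) with hN₁def
    have hN₀0 : 0 ≤ N₀ := X₀.norm_nonneg _ ha₀
    have hN₁0 : 0 ≤ N₁ := X₁.norm_nonneg _ ha₁
    have hRHS : (pConv X₀ p).norm a₀ + s ^ (1/p) * (pConv X₁ p).norm a₁
        = N₀ ^ (1/p) + s ^ (1/p) * N₁ ^ (1/p) := rfl
    rw [hRHS]
    set X := N₀ ^ (1/p) with hXdef
    set Y := s ^ (1/p) * N₁ ^ (1/p) with hYdef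
    have hX0 : 0 ≤ X := Real.rpow_nonneg hN₀0 _
    have hY0 : 0 ≤ Y := by positivity
    have hXp : X ^ p = N₀ := by
      rw [hXdef, ← Real.rpow_mul hN₀0, one_div, inv_mul_cancel₀ hp0.ne', Real.rpow_one]
    have hYp : Y ^ p = s * N₁ := by
      rw [hYdef, Real.mul_rpow (Real.rpow_nonneg hs.le _) (Real.rpow_nonneg hN₁0 _),
        ← Real.rpow_mul hs.le, ← Real.rpow_mul hN₁0, one_div, inv_mul_cancel₀ hp0.ne',
        Real.rpow_one, Real.rpow_one]
    have hgae : ∀ᵐ ω ∂μ, g ω = a₀ ω + a₁ ω := by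
      rw [hsum]; exact AEEqFun.coeFn_add a₀ a₁
    have key : Kfun X₀.toFunctionSpace X₁.toFunctionSpace s (absRpow p g) ≤ (X + Y) ^ p := by
      rcases eq_or_lt_of_le hX0 with hX | hX
      · -- X = 0, so a₀ = 0 a.e.
        have hN00 : N₀ = 0 := by
          have h' : N₀ ^ (1/p) = 0 := hX.symm
          have := (Real.rpow_eq_zero_iff_of_nonneg hN₀0).mp h'
          exact this.1
        have ha00 : absRpow p a₀ = 0 := (X₀.norm_eq_zero_iff _ ha₀).mp hN00
        have ha0ae : ∀ᵐ ω ∂μ, a₀ ω = 0 := by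
          have h0 : ∀ᵐ ω ∂μ, (absRpow p a₀) ω = (0 : Ω →ₘ[μ] ℝ) ω := by
            rw [ha00]; exact Filter.Eventually.of_forall fun ω => rfl
          filter_upwards [h0, CA_absRpow_ae p a₀, CA_zero_ae] with ω e1 e2 e3
          have h4 : |a₀ ω| ^ p = 0 := by rw [← e2, e1, e3]
          exact abs_eq_zero.mp ((Real.rpow_eq_zero_iff_of_nonneg (abs_nonneg _)).mp h4).1
        have habs : ∀ᵐ ω ∂μ, |(absRpow p g) ω| ≤ |(absRpow p a₁) ω| := by
          filter_upwards [ha0ae, hgae, CA_absRpow_ae p g, CA_absRpow_ae p a₁]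
            with ω e1 e2 e3 e4
          rw [e3, e4, e2, e1, zero_add]
        have hb1 := CA_mem_norm (X := X₁) ha₁ habs
        have hz : X₀.norm 0 = 0 := (X₀.norm_eq_zero_iff 0 X₀.zero_mem).mpr rfl
        have hK1 := CA_K_le (CA_nn X₀) (CA_nn X₁) hs.le X₀.zero_mem hb1.1
          (show absRpow p g = 0 + absRpow p g by rw [zero_add])
        calc Kfun X₀.toFunctionSpace X₁.toFunctionSpace s (absRpow p g)
            ≤ X₀.norm 0 + s * X₁.norm (absRpow p g) := hK1
          _ ≤ 0 + s * N₁ := by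
              rw [hz]
              exact add_le_add le_rfl (mul_le_mul_of_nonneg_left hb1.2 hs.le)
          _ = Y ^ p := by rw [zero_add, hYp]
          _ ≤ (X + Y) ^ p := Real.rpow_le_rpow hY0 (by linarith) hp0.le
      · rcases eq_or_lt_of_le hY0 with hY | hY
        · -- Y = 0, so N₁ = 0, a₁ = 0 a.e.
          have hN10 : N₁ = 0 := by
            have hs' : s ^ (1/p) ≠ 0 := (Real.rpow_pos_of_pos hs _).ne'
            have h' : N₁ ^ (1/p) = 0 := by
              rcases mul_eq_zero.mp hY.symm with h | h
              · exact absurd h hs'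
              · exact h
            exact ((Real.rpow_eq_zero_iff_of_nonneg hN₁0).mp h').1
          have ha10 : absRpow p a₁ = 0 := (X₁.norm_eq_zero_iff _ ha₁).mp hN10
          have ha1ae : ∀ᵐ ω ∂μ, a₁ ω = 0 := by
            have h0 : ∀ᵐ ω ∂μ, (absRpow p a₁) ω = (0 : Ω →ₘ[μ] ℝ) ω := by
              rw [ha10]; exact Filter.Eventually.of_forall fun ω => rfl
            filter_upwards [h0, CA_absRpow_ae p a₁, CA_zero_ae] with ω e1 e2 e3
            have h4 : |a₁ ω| ^ p = 0 := by rw [← e2, e1, e3]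
            exact abs_eq_zero.mp ((Real.rpow_eq_zero_iff_of_nonneg (abs_nonneg _)).mp h4).1
          have habs : ∀ᵐ ω ∂μ, |(absRpow p g) ω| ≤ |(absRpow p a₀) ω| := by
            filter_upwards [ha1ae, hgae, CA_absRpow_ae p g, CA_absRpow_ae p a₀]
              with ω e1 e2 e3 e4
            rw [e3, e4, e2, e1, add_zero]
          have hb0 := CA_mem_norm (X := X₀) ha₀ habs
          have hz : X₁.norm 0 = 0 := (X₁.norm_eq_zero_iff 0 X₁.zero_mem).mpr rfl
          have hK1 := CA_K_le (CA_nn X₀) (CA_nn X₁) hs.le hb0.1 X₁.zero_mem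
            (show absRpow p g = absRpow p g + 0 by rw [add_zero])
          calc Kfun X₀.toFunctionSpace X₁.toFunctionSpace s (absRpow p g)
              ≤ X₀.norm (absRpow p g) + s * X₁.norm 0 := hK1
            _ ≤ N₀ + s * 0 := by
                rw [hz]
                exact add_le_add hb0.2 le_rfl
            _ = X ^ p := by rw [mul_zero, add_zero, hXp]
            _ ≤ (X + Y) ^ p := Real.rpow_le_rpow hX0 (by linarith) hp0.le
        · -- main case : X, Y > 0
          set θ : ℝ := X / (X + Y) with hθdef
          have hXY : 0 < X + Y := by linarith
          have hθ : 0 < θ := by positivity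
          have hθ1 : θ < 1 := by
            rw [hθdef, div_lt_one hXY]; linarith
          have h1θ : 1 - θ = Y / (X + Y) := by
            rw [hθdef]; field_simp; ring
          set c₀ : ℝ := θ ^ (1 - p) with hc₀def
          set c₁ : ℝ := (Y / (X + Y)) ^ (1 - p) with hc₁def
          have hc₀ : 0 < c₀ := Real.rpow_pos_of_pos hθ _
          have hc₁ : 0 < c₁ := Real.rpow_pos_of_pos (by positivity) _
          have hsm₀ : ∀ᵐ ω ∂μ, (c₀ • absRpow p a₀) ω = c₀ * |a₀ ω| ^ p := by
            filter_upwards [AEEqFun.coeFn_smul c₀ (absRpow p a₀), CA_absRpow_ae p a₀]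
              with ω e1 e2
            have e1' : (c₀ • absRpow p a₀) ω = c₀ * (absRpow p a₀) ω := by rw [e1]; rfl
            rw [e1', e2]
          have hsm₁ : ∀ᵐ ω ∂μ, (c₁ • absRpow p a₁) ω = c₁ * |a₁ ω| ^ p := by
            filter_upwards [AEEqFun.coeFn_smul c₁ (absRpow p a₁), CA_absRpow_ae p a₁]
              with ω e1 e2
            have e1' : (c₁ • absRpow p a₁) ω = c₁ * (absRpow p a₁) ω := by rw [e1]; rfl
            rw [e1', e2]
          have hle : ∀ᵐ ω ∂μ, (absRpow p g) ω ≤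
              (c₀ • absRpow p a₀) ω + (c₁ • absRpow p a₁) ω := by
            filter_upwards [CA_absRpow_ae p g, hgae, CA_absRpow_ae p a₀, CA_absRpow_ae p a₁,
              hsm₀, hsm₁] with ω e1 e2 e3 e4 e5 e6
            rw [e1, e5, e6, e2]
            calc |a₀ ω + a₁ ω| ^ p ≤ (|a₀ ω| + |a₁ ω|) ^ p :=
                Real.rpow_le_rpow (abs_nonneg _) (abs_add_le _ _) hp0.le
              _ ≤ θ ^ (1-p) * |a₀ ω| ^ p + (1 - θ) ^ (1-p) * |a₁ ω| ^ p :=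
                CA_convex_split hp.le hθ hθ1 (abs_nonneg _) (abs_nonneg _)
              _ = c₀ * |a₀ ω| ^ p + c₁ * |a₁ ω| ^ p := by rw [h1θ]
          obtain ⟨b₀, hb₀, b₁, hb₁, hsum2, hn₀, hn₁⟩ := CA_split (X₀ := X₀) (X₁ := X₁)
            (X₀.smul_mem c₀ ha₀) (X₁.smul_mem c₁ ha₁)
            (by filter_upwards [CA_absRpow_ae p g] with ω e; rw [e]; positivity)
            (by filter_upwards [hsm₀] with ω e; rw [e]; positivity)
            (by filter_upwards [hsm₁] with ω e; rw [e]; positivity)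
            hle
          have hnD₀ : X₀.norm (c₀ • absRpow p a₀) = c₀ * N₀ := by
            rw [X₀.norm_smul c₀ _ ha₀, abs_of_pos hc₀]
          have hnD₁ : X₁.norm (c₁ • absRpow p a₁) = c₁ * N₁ := by
            rw [X₁.norm_smul c₁ _ ha₁, abs_of_pos hc₁]
          have hK1 := CA_K_le (CA_nn X₀) (CA_nn X₁) hs.le hb₀ hb₁ hsum2
          calc Kfun X₀.toFunctionSpace X₁.toFunctionSpace s (absRpow p g)
              ≤ X₀.norm b₀ + s * X₁.norm b₁ := hK1
            _ ≤ c₀ * N₀ + s * (c₁ * N₁) := by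
                rw [← hnD₀, ← hnD₁]
                exact add_le_add hn₀ (mul_le_mul_of_nonneg_left hn₁ hs.le)
            _ = θ ^ (1-p) * X ^ p + (Y/(X+Y)) ^ (1-p) * Y ^ p := by
                rw [hXp, hYp]; ring
            _ = (X + Y) ^ p := CA_theta_calc hX hY
    have hr0 : 0 ≤ X + Y := by linarith
    calc (Kfun X₀.toFunctionSpace X₁.toFunctionSpace s (absRpow p g)) ^ (1/p)
        ≤ ((X + Y) ^ p) ^ (1/p) := Real.rpow_le_rpow hKX0 key (by positivity)
      _ = X + Y := by
          rw [← Real.rpow_mul hr0, mul_one_div, div_self hp0.ne', Real.rpow_one]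
  have hKc0 : 0 ≤ Kfun (pConv X₀ p) (pConv X₁ p) (s ^ (1/p)) g :=
    CA_K_nonneg (CA_pConvNorm_nonneg X₀ p) (CA_pConvNorm_nonneg X₁ p)
      (Real.rpow_pos_of_pos hs _).le g
  calc Kfun X₀.toFunctionSpace X₁.toFunctionSpace s (absRpow p g)
      = ((Kfun X₀.toFunctionSpace X₁.toFunctionSpace s (absRpow p g)) ^ (1/p)) ^ p := by
        rw [← Real.rpow_mul hKX0, one_div, inv_mul_cancel₀ hp0.ne', Real.rpow_one]
    _ ≤ (Kfun (pConv X₀ p) (pConv X₁ p) (s ^ (1/p)) g) ^ p :=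
        Real.rpow_le_rpow (by positivity) claim hp0.le


private lemma CA_K_upper {p : ℝ} (hp : 1 < p) {f : Ω →ₘ[μ] ℝ}
    (hf : f ∈ sumSet (pConv X₀ p) (pConv X₁ p)) {s : ℝ} (hs : 0 < s) :
    (Kfun (pConv X₀ p) (pConv X₁ p) (s ^ (1/p)) f) ^ p
      ≤ 2 ^ (p-1) * Kfun X₀.toFunctionSpace X₁.toFunctionSpace s (absRpow p f) := by
  have hp0 : 0 < p := by positivity
  have hts : 0 < s ^ (1/p) := Real.rpow_pos_of_pos hs _
  have hKc0 : 0 ≤ Kfun (pConv X₀ p) (pConv X₁ p) (s ^ (1/p)) f :=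
    CA_K_nonneg (CA_pConvNorm_nonneg X₀ p) (CA_pConvNorm_nonneg X₁ p) hts.le f
  have hfsum : absRpow p f ∈ sumSet X₀.toFunctionSpace X₁.toFunctionSpace :=
    CA_absRpow_sum hp hf
  have claim : ∀ b₀ ∈ X₀.toFunctionSpace.carrier, ∀ b₁ ∈ X₁.toFunctionSpace.carrier,
      absRpow p f = b₀ + b₁ →
      2 ^ (1-p) * (Kfun (pConv X₀ p) (pConv X₁ p) (s ^ (1/p)) f) ^ p
        ≤ X₀.toFunctionSpace.norm b₀ + s * X₁.toFunctionSpace.norm b₁ := by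
    intro b₀ hb₀ b₁ hb₁ hsum
    have hfab : AEMeasurable (fun ω => |f ω| ^ p) μ :=
      ((by measurability : Measurable fun x : ℝ => |x| ^ p).comp_aemeasurable f.aemeasurable)
    set β₀ : Ω → ℝ := fun ω => max 0 (min (|f ω| ^ p) (b₀ ω)) with hβ₀def
    have hβ₀m : AEMeasurable β₀ μ := aemeasurable_const.max (hfab.min b₀.aemeasurable)
    set a₀fn : Ω → ℝ := fun ω => f ω * (β₀ ω / (β₀ ω + (|f ω| ^ p - β₀ ω))) with ha₀fndef
    have ha₀m : AEMeasurable a₀fn μ :=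
      f.aemeasurable.mul (hβ₀m.div (hβ₀m.add (hfab.sub hβ₀m)))
    set a₀ : Ω →ₘ[μ] ℝ := AEEqFun.mk a₀fn ha₀m.aestronglyMeasurable with ha₀def
    have ha₀ae : ∀ᵐ ω ∂μ, a₀ ω = a₀fn ω := AEEqFun.coeFn_mk _ _
    have hsumf : f = a₀ + (f - a₀) := by abel
    have habs : ∀ᵐ ω ∂μ, |f ω| ^ p = b₀ ω + b₁ ω := by
      have h1 : ∀ᵐ ω ∂μ, (absRpow p f) ω = (b₀ + b₁) ω := by
        rw [hsum]; exact Filter.Eventually.of_forall fun ω => rfl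
      filter_upwards [h1, CA_absRpow_ae p f, AEEqFun.coeFn_add b₀ b₁] with ω e1 e2 e3
      have e3' : (b₀ + b₁) ω = b₀ ω + b₁ ω := e3
      rw [← e2, e1, e3']
    have mq0 : ∀ᵐ ω ∂μ, |(absRpow p a₀) ω| ≤ |b₀ ω| := by
      filter_upwards [CA_absRpow_ae p a₀, ha₀ae, habs] with ω e1 e2 e3
      have tr := CA_trunc (c := |f ω| ^ p) (by positivity) e3
      have he : |f ω| ^ p = β₀ ω + (|f ω| ^ p - β₀ ω) := by ring
      have tp := CA_theta_point hp tr.1 (by linarith [tr.2.2.1] :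
        (0:ℝ) ≤ |f ω| ^ p - β₀ ω) he
      rw [e1, e2, abs_of_nonneg (Real.rpow_nonneg (abs_nonneg _) _)]
      exact le_trans tp.1 tr.2.1
    have mq1 : ∀ᵐ ω ∂μ, |(absRpow p (f - a₀)) ω| ≤ |b₁ ω| := by
      filter_upwards [CA_absRpow_ae p (f - a₀), ha₀ae, habs,
        AEEqFun.coeFn_sub f a₀] with ω e1 e2 e3 e4
      have e4' : (f - a₀) ω = f ω - a₀ ω := e4
      have tr := CA_trunc (c := |f ω| ^ p) (by positivity) e3
      have he : |f ω| ^ p = β₀ ω + (|f ω| ^ p - β₀ ω) := by ring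
      have tp := CA_theta_point hp tr.1 (by linarith [tr.2.2.1] :
        (0:ℝ) ≤ |f ω| ^ p - β₀ ω) he
      rw [e1, e4', e2, abs_of_nonneg (Real.rpow_nonneg (abs_nonneg _) _)]
      calc |f ω - a₀fn ω| ^ p ≤ |f ω| ^ p - β₀ ω := tp.2
        _ ≤ |b₁ ω| := tr.2.2.2.2
    have m0 := CA_mem_norm (X := X₀) hb₀ mq0
    have m1 := CA_mem_norm (X := X₁) hb₁ mq1
    have hnb₀ : 0 ≤ X₀.norm b₀ := X₀.norm_nonneg _ hb₀
    have hnb₁ : 0 ≤ X₁.norm b₁ := X₁.norm_nonneg _ hb₁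
    have hKle := CA_K_le (CA_pConvNorm_nonneg X₀ p) (CA_pConvNorm_nonneg X₁ p) hts.le
      (a₀ := a₀) (a₁ := f - a₀) m0.1 m1.1 hsumf
    have hstep : Kfun (pConv X₀ p) (pConv X₁ p) (s ^ (1/p)) f
        ≤ (X₀.norm b₀) ^ (1/p) + s ^ (1/p) * (X₁.norm b₁) ^ (1/p) := by
      refine le_trans hKle (add_le_add ?_ ?_)
      · exact Real.rpow_le_rpow (X₀.norm_nonneg _ m0.1) m0.2 (by positivity)
      · exact mul_le_mul_of_nonneg_left
          (Real.rpow_le_rpow (X₁.norm_nonneg _ m1.1) m1.2 (by positivity)) hts.le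
    have hstep2 : Kfun (pConv X₀ p) (pConv X₁ p) (s ^ (1/p)) f
        ≤ 2 ^ (1 - 1/p) * (X₀.norm b₀ + s * X₁.norm b₁) ^ (1/p) := by
      refine le_trans hstep ?_
      rw [← Real.mul_rpow hs.le hnb₁]
      exact CA_powMean hp hnb₀ (by positivity)
    have hpow : (Kfun (pConv X₀ p) (pConv X₁ p) (s ^ (1/p)) f) ^ p
        ≤ 2 ^ (p-1) * (X₀.norm b₀ + s * X₁.norm b₁) := by
      have h1 := Real.rpow_le_rpow hKc0 hstep2 hp0.le
      have e3 : ((X₀.norm b₀ + s * X₁.norm b₁) ^ (1/p)) ^ p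
          = X₀.norm b₀ + s * X₁.norm b₁ := by
        rw [← Real.rpow_mul (by positivity), one_div, inv_mul_cancel₀ hp0.ne', Real.rpow_one]
      rwa [Real.mul_rpow (by positivity) (Real.rpow_nonneg (by positivity) _),
        ← Real.rpow_mul (by norm_num : (0:ℝ) ≤ 2),
        show (1 - 1/p) * p = p - 1 by field_simp, e3] at h1
    have h2 : (2:ℝ) ^ (1-p) * 2 ^ (p-1) = 1 := by
      rw [← Real.rpow_add (by norm_num : (0:ℝ) < 2)]; norm_num
    calc 2 ^ (1-p) * (Kfun (pConv X₀ p) (pConv X₁ p) (s ^ (1/p)) f) ^ p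
        ≤ 2 ^ (1-p) * (2 ^ (p-1) * (X₀.norm b₀ + s * X₁.norm b₁)) :=
          mul_le_mul_of_nonneg_left hpow (by positivity)
      _ = X₀.norm b₀ + s * X₁.norm b₁ := by rw [← mul_assoc, h2, one_mul]
  have hmain := CA_le_K hfsum claim
  have h2 : (2:ℝ) ^ (p-1) * 2 ^ (1-p) = 1 := by
    rw [← Real.rpow_add (by norm_num : (0:ℝ) < 2)]; norm_num
  calc (Kfun (pConv X₀ p) (pConv X₁ p) (s ^ (1/p)) f) ^ p
      = 2 ^ (p-1) * (2 ^ (1-p) * (Kfun (pConv X₀ p) (pConv X₁ p) (s ^ (1/p)) f) ^ p) := by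
        rw [← mul_assoc, h2, one_mul]
    _ ≤ 2 ^ (p-1) * Kfun X₀.toFunctionSpace X₁.toFunctionSpace s (absRpow p f) :=
        mul_le_mul_of_nonneg_left hmain (by positivity)


end CalderonAux2

set_option maxHeartbeats 4000000 in
/-- If `(X₀, X₁)` is a positive `C`-Calderón couple of Banach lattices of
measurable functions on a common measure space, and `X₀` and `X₁` are complete lattices,
then for every `p ∈ (1, ∞)` the couple of `p`-convexifications `(X₀^(p), X₁^(p))` is a
`2^(1-1/p) C^(1/p)`-Calderón couple. -/
theorem pConv_isCCalderonCouple
    (X₀ X₁ : BanachFunctionLattice Ω μ) (C : ℝ) (hC : 0 < C)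
    (hpos : IsPositiveCCalderonCouple X₀.toFunctionSpace X₁.toFunctionSpace C)
    (h₀ : HasLUBP X₀.carrier) (h₁ : HasLUBP X₁.carrier)
    (p : ℝ) (hp : 1 < p) :
    IsCCalderonCouple (pConv X₀ p) (pConv X₁ p) (2 ^ (1 - 1 / p) * C ^ (1 / p)) := by
  intro f hf g hg hK
  have hp0 : 0 < p := by positivity
  have hp1 : p - 1 ≠ 0 := by
    have : 0 < p - 1 := by linarith
    exact this.ne'
  set q : ℝ := Real.conjExponent p with hqdef
  have hq : p.HolderConjugate q := Real.HolderConjugate.conjExponent hp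
  have hqval : q = p / (p - 1) := hq.conjugate_eq
  have hq0 : 0 < q := hq.symm.pos
  -- the elements F and G of the original couple
  have hFa : absRpow p f ∈ sumSet X₀.toFunctionSpace X₁.toFunctionSpace := CA_absRpow_sum hp hf
  have hGa : absRpow p g ∈ sumSet X₀.toFunctionSpace X₁.toFunctionSpace := CA_absRpow_sum hp hg
  set F : Ω →ₘ[μ] ℝ := (2:ℝ)^(p-1) • absRpow p f with hFdef
  have hFm : F ∈ sumSet X₀.toFunctionSpace X₁.toFunctionSpace := CA_sum_smul _ hFa
  -- K-functional comparison
  have hKchain : ∀ t > 0, Kfun X₀.toFunctionSpace X₁.toFunctionSpace t (absRpow p g)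
      ≤ Kfun X₀.toFunctionSpace X₁.toFunctionSpace t F := by
    intro t ht
    have c1 := CA_K_lower (X₀ := X₀) (X₁ := X₁) hp hg ht
    have c2 : Kfun (pConv X₀ p) (pConv X₁ p) (t ^ (1/p)) g
        ≤ Kfun (pConv X₀ p) (pConv X₁ p) (t ^ (1/p)) f :=
      hK _ (Real.rpow_pos_of_pos ht _)
    have c3 := CA_K_upper (X₀ := X₀) (X₁ := X₁) hp hf ht
    have c4 := CA_K_smul_ge (X₀ := X₀) (X₁ := X₁)
      (show (0:ℝ) < 2^(p-1) by positivity) hFa ht.le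
    have hkc0 : 0 ≤ Kfun (pConv X₀ p) (pConv X₁ p) (t ^ (1/p)) g :=
      CA_K_nonneg (CA_pConvNorm_nonneg X₀ p) (CA_pConvNorm_nonneg X₁ p)
        (Real.rpow_pos_of_pos ht _).le g
    calc Kfun X₀.toFunctionSpace X₁.toFunctionSpace t (absRpow p g)
        ≤ (Kfun (pConv X₀ p) (pConv X₁ p) (t ^ (1/p)) g) ^ p := c1
      _ ≤ (Kfun (pConv X₀ p) (pConv X₁ p) (t ^ (1/p)) f) ^ p :=
          Real.rpow_le_rpow hkc0 c2 hp0.le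
      _ ≤ 2^(p-1) * Kfun X₀.toFunctionSpace X₁.toFunctionSpace t (absRpow p f) := c3
      _ ≤ Kfun X₀.toFunctionSpace X₁.toFunctionSpace t F := c4
  -- positivity of F and G
  have hFpos : 0 ≤ F := by
    apply CA_ae_le
    filter_upwards [CA_zero_ae, AEEqFun.coeFn_smul ((2:ℝ)^(p-1)) (absRpow p f),
      CA_absRpow_ae p f] with ω e1 e2 e3
    have e2' : F ω = (2:ℝ)^(p-1) * (absRpow p f) ω := by rw [hFdef, e2]; rfl
    rw [e1, e2', e3]; positivity
  have hGpos : 0 ≤ absRpow p g := by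
    apply CA_ae_le
    filter_upwards [CA_zero_ae, CA_absRpow_ae p g] with ω e1 e2
    rw [e1, e2]; positivity
  obtain ⟨S, HS, HP, HSF, HN⟩ := hpos F hFm (absRpow p g) hGa hFpos hGpos hKchain
  -- the multipliers u and m
  have humeas : AEMeasurable (fun ω => |f ω| ^ p / f ω) μ :=
    ((by measurability : Measurable fun x : ℝ => |x| ^ p).comp_aemeasurable
      f.aemeasurable).div f.aemeasurable
  set u : Ω →ₘ[μ] ℝ := AEEqFun.mk (fun ω => |f ω| ^ p / f ω)
    humeas.aestronglyMeasurable with hudef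
  have huae : ∀ᵐ ω ∂μ, u ω = |f ω| ^ p / f ω := AEEqFun.coeFn_mk _ _
  have hmmeas : AEMeasurable (fun ω => g ω / |g ω| ^ p) μ :=
    g.aemeasurable.div ((by measurability : Measurable fun x : ℝ => |x| ^ p).comp_aemeasurable
      g.aemeasurable)
  set m : Ω →ₘ[μ] ℝ := AEEqFun.mk (fun ω => g ω / |g ω| ^ p)
    hmmeas.aestronglyMeasurable with hmdef
  have hmae : ∀ᵐ ω ∂μ, m ω = g ω / |g ω| ^ p := AEEqFun.coeFn_mk _ _
  set T : (Ω →ₘ[μ] ℝ) → (Ω →ₘ[μ] ℝ) := fun h => (2:ℝ)^(p-1) • (m * S (h * u)) with hTdef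
  -- basic pointwise facts
  have hfu : f * u = absRpow p f := by
    apply AEEqFun.ext
    filter_upwards [AEEqFun.coeFn_mul f u, huae, CA_absRpow_ae p f] with ω e1 e2 e3
    have e1' : (f * u) ω = f ω * u ω := e1
    rw [e1', e2, e3]
    rcases eq_or_ne (f ω) 0 with h0 | h0
    · rw [h0]; simp [Real.zero_rpow hp0.ne']
    · field_simp
  have habs_u : ∀ᵐ ω ∂μ, |u ω| = |f ω| ^ (p-1) := by
    filter_upwards [huae] with ω e
    rw [e]
    rcases eq_or_ne (f ω) 0 with h0 | h0
    · rw [h0]; simp [Real.zero_rpow hp1, Real.zero_rpow hp0.ne']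
    · have hfa : 0 < |f ω| := abs_pos.2 h0
      rw [abs_div, abs_of_nonneg (Real.rpow_nonneg (abs_nonneg _) _),
        Real.rpow_sub hfa, Real.rpow_one]
  have hmg : ∀ᵐ ω ∂μ, m ω * |g ω| ^ p = g ω := by
    filter_upwards [hmae] with ω e
    rw [e]
    rcases eq_or_ne (g ω) 0 with h0 | h0
    · rw [h0]; simp
    · have hga : (0:ℝ) < |g ω| ^ p := Real.rpow_pos_of_pos (abs_pos.2 h0) _
      field_simp
  have habs_m : ∀ᵐ ω ∂μ, |m ω| = |g ω| / |g ω| ^ p := by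
    filter_upwards [hmae] with ω e
    rw [e, abs_div, abs_of_nonneg (Real.rpow_nonneg (abs_nonneg _) _)]
  -- S applied to |f|^p
  have h2pow : (2:ℝ)^(1-p) * 2^(p-1) = 1 := by
    rw [← Real.rpow_add (by norm_num : (0:ℝ) < 2)]; norm_num
  have hSabs : S (absRpow p f) = (2:ℝ)^(1-p) • absRpow p g := by
    have e : absRpow p f = (2:ℝ)^(1-p) • F := by
      rw [hFdef, smul_smul, h2pow, one_smul]
    rw [e, HS.2.1 _ _ hFm, HSF]
  -- membership of h * u
  have hwmem : ∀ h, h ∈ sumSet (pConv X₀ p) (pConv X₁ p) →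
      h * u ∈ sumSet X₀.toFunctionSpace X₁.toFunctionSpace := by
    intro h hh
    have hW : absRpow p h + absRpow p f ∈ sumSet X₀.toFunctionSpace X₁.toFunctionSpace :=
      CA_sum_add (CA_absRpow_sum hp hh) hFa
    apply CA_sum_ideal hW
    filter_upwards [AEEqFun.coeFn_mul h u, habs_u, CA_absRpow_ae p h, CA_absRpow_ae p f,
      AEEqFun.coeFn_add (absRpow p h) (absRpow p f)] with ω e1 e2 e3 e4 e5
    have e1' : (h * u) ω = h ω * u ω := e1
    have e5' : (absRpow p h + absRpow p f) ω = (absRpow p h) ω + (absRpow p f) ω := e5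
    rw [e1', e5', e3, e4, abs_mul, e2]
    have young := CA_young hq (abs_nonneg (h ω))
      (Real.rpow_nonneg (abs_nonneg (f ω)) (p-1)) one_pos
    rw [Real.one_rpow, Real.one_rpow, one_mul, mul_one] at young
    have hfq : (|f ω| ^ (p-1)) ^ q = |f ω| ^ p := by
      rw [← Real.rpow_mul (abs_nonneg _), hq.sub_one_mul_conj]
    rw [hfq] at young
    have d1 : |h ω| ^ p / p ≤ |h ω| ^ p :=
      div_le_self (Real.rpow_nonneg (abs_nonneg _) _) hp.le
    have d2 : |f ω| ^ p / q ≤ |f ω| ^ p :=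
      div_le_self (Real.rpow_nonneg (abs_nonneg _) _) hq.symm.lt.le
    have : |h ω| * |f ω| ^ (p-1) ≤ |h ω| ^ p + |f ω| ^ p := by linarith
    exact le_trans this (le_abs_self _)
  -- positivity of S on nonnegative elements, pointwise
  have hSpos_pt : ∀ x, x ∈ sumSet X₀.toFunctionSpace X₁.toFunctionSpace →
      (∀ᵐ ω ∂μ, 0 ≤ x ω) → ∀ᵐ ω ∂μ, 0 ≤ (S x) ω := by
    intro x hx hxp
    have := HP x hx (CA_ae_le (by filter_upwards [hxp, CA_zero_ae] with ω a b; rw [b]; exact a))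
    filter_upwards [CA_le_ae this, CA_zero_ae] with ω a b
    rw [b] at a; exact a
  have hApos : ∀ h, h ∈ sumSet (pConv X₀ p) (pConv X₁ p) →
      ∀ᵐ ω ∂μ, 0 ≤ (S (absRpow p h)) ω := by
    intro h hh
    apply hSpos_pt _ (CA_absRpow_sum hp hh)
    filter_upwards [CA_absRpow_ae p h] with ω e
    rw [e]; positivity
  -- Hölder inequality for S
  have hHold : ∀ h, h ∈ sumSet (pConv X₀ p) (pConv X₁ p) →
      ∀ᵐ ω ∂μ, |(S (h * u)) ω| ≤
        ((S (absRpow p h)) ω) ^ (1/p) * ((S (absRpow p f)) ω) ^ (1/q) := by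
    intro h hh
    have hw := hwmem h hh
    have hhsum := CA_absRpow_sum hp hh
    have hApt := hApos h hh
    have hBpt := hApos f hf
    have hall : ∀ l : ℚ, 0 < l → ∀ᵐ ω ∂μ, |(S (h * u)) ω| ≤
        ((l:ℝ)^p / p) * (S (absRpow p h)) ω + (1/(q * (l:ℝ)^q)) * (S (absRpow p f)) ω := by
      intro l hl
      have hl0 : (0:ℝ) < (l:ℝ) := by exact_mod_cast hl
      set c₀ : ℝ := (l:ℝ)^p / p with hc₀def
      set c₁ : ℝ := 1/(q * (l:ℝ)^q) with hc₁def
      have hVmem : c₀ • absRpow p h + c₁ • absRpow p f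
          ∈ sumSet X₀.toFunctionSpace X₁.toFunctionSpace :=
        CA_sum_add (CA_sum_smul _ hhsum) (CA_sum_smul _ hFa)
      have hdom : ∀ᵐ ω ∂μ, |(h * u) ω| ≤ (c₀ • absRpow p h + c₁ • absRpow p f) ω := by
        filter_upwards [AEEqFun.coeFn_mul h u, habs_u, CA_absRpow_ae p h, CA_absRpow_ae p f,
          AEEqFun.coeFn_add (c₀ • absRpow p h) (c₁ • absRpow p f),
          AEEqFun.coeFn_smul c₀ (absRpow p h), AEEqFun.coeFn_smul c₁ (absRpow p f)]
          with ω e1 e2 e3 e4 e5 e6 e7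
        have e1' : (h * u) ω = h ω * u ω := e1
        have e5' : (c₀ • absRpow p h + c₁ • absRpow p f) ω
            = (c₀ • absRpow p h) ω + (c₁ • absRpow p f) ω := e5
        have e6' : (c₀ • absRpow p h) ω = c₀ * (absRpow p h) ω := by rw [e6]; rfl
        have e7' : (c₁ • absRpow p f) ω = c₁ * (absRpow p f) ω := by rw [e7]; rfl
        rw [e1', e5', e6', e7', e3, e4, abs_mul, e2]
        have young := CA_young hq (abs_nonneg (h ω))
          (Real.rpow_nonneg (abs_nonneg (f ω)) (p-1)) hl0
        have hfq : (|f ω| ^ (p-1)) ^ q = |f ω| ^ p := by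
          rw [← Real.rpow_mul (abs_nonneg _), hq.sub_one_mul_conj]
        rw [hfq] at young
        calc |h ω| * |f ω| ^ (p-1)
            ≤ (l:ℝ)^p * |h ω| ^ p / p + |f ω| ^ p / (q * (l:ℝ)^q) := young
          _ = c₀ * |h ω| ^ p + c₁ * |f ω| ^ p := by rw [hc₀def, hc₁def]; ring
      have hSV := CA_S_abs HS HP hw hVmem hdom
      have hlin : S (c₀ • absRpow p h + c₁ • absRpow p f)
          = c₀ • S (absRpow p h) + c₁ • S (absRpow p f) := by
        rw [HS.1 _ (CA_sum_smul _ hhsum) _ (CA_sum_smul _ hFa),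
          HS.2.1 _ _ hhsum, HS.2.1 _ _ hFa]
      filter_upwards [hSV,
        AEEqFun.coeFn_add (c₀ • S (absRpow p h)) (c₁ • S (absRpow p f)),
        AEEqFun.coeFn_smul c₀ (S (absRpow p h)), AEEqFun.coeFn_smul c₁ (S (absRpow p f))]
        with ω e1 e2 e3 e4
      rw [hlin] at e1
      have e2' : (c₀ • S (absRpow p h) + c₁ • S (absRpow p f)) ω
          = (c₀ • S (absRpow p h)) ω + (c₁ • S (absRpow p f)) ω := e2
      have e3' : (c₀ • S (absRpow p h)) ω = c₀ * (S (absRpow p h)) ω := by rw [e3]; rfl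
      have e4' : (c₁ • S (absRpow p f)) ω = c₁ * (S (absRpow p f)) ω := by rw [e4]; rfl
      rw [e2', e3', e4'] at e1
      exact e1
    have hall' : ∀ᵐ ω ∂μ, ∀ l : ℚ, 0 < l → |(S (h * u)) ω| ≤
        ((l:ℝ)^p / p) * (S (absRpow p h)) ω + (1/(q * (l:ℝ)^q)) * (S (absRpow p f)) ω := by
      rw [MeasureTheory.ae_all_iff]
      intro l
      by_cases hl : 0 < l
      · exact (hall l hl).mono fun ω hb _ => hb
      · exact Filter.Eventually.of_forall fun ω hlq => absurd hlq hl
    filter_upwards [hall', hApt, hBpt] with ω e1 e2 e3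
    apply CA_opt hq e2 e3
    intro l hl
    refine le_trans (e1 l hl) (le_of_eq ?_)
    ring
  -- The key pointwise bound for T
  have hTbound : ∀ h, h ∈ sumSet (pConv X₀ p) (pConv X₁ p) →
      ∀ᵐ ω ∂μ, (absRpow p (T h)) ω ≤ 2^(p-1) * (S (absRpow p h)) ω := by
    intro h hh
    have hH := hHold h hh
    have hApt := hApos h hh
    have hBpt : ∀ᵐ ω ∂μ, (S (absRpow p f)) ω = 2^(1-p) * |g ω| ^ p := by
      have h1 : ∀ᵐ ω ∂μ, (S (absRpow p f)) ω = ((2:ℝ)^(1-p) • absRpow p g) ω := by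
        rw [hSabs]; exact Filter.Eventually.of_forall fun _ => rfl
      filter_upwards [h1, AEEqFun.coeFn_smul ((2:ℝ)^(1-p)) (absRpow p g),
        CA_absRpow_ae p g] with ω e1 e2 e3
      have e2' : ((2:ℝ)^(1-p) • absRpow p g) ω = (2:ℝ)^(1-p) * (absRpow p g) ω := by
        rw [e2]; rfl
      rw [e1, e2', e3]
    have hTae : ∀ᵐ ω ∂μ, (T h) ω = 2^(p-1) * (m ω * (S (h * u)) ω) := by
      filter_upwards [AEEqFun.coeFn_smul ((2:ℝ)^(p-1)) (m * S (h * u)),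
        AEEqFun.coeFn_mul m (S (h * u))] with ω e1 e2
      have e1' : ((2:ℝ)^(p-1) • (m * S (h * u))) ω = (2:ℝ)^(p-1) * (m * S (h * u)) ω := by
        rw [e1]; rfl
      have e2' : (m * S (h * u)) ω = m ω * (S (h * u)) ω := e2
      show ((2:ℝ)^(p-1) • (m * S (h * u))) ω = _
      rw [e1', e2']
    filter_upwards [CA_absRpow_ae p (T h), hTae, hH, hApt, hBpt, habs_m, hmae]
      with ω e1 e2 e3 e4 e5 e6 e7
    rw [e1, e2]
    by_cases hg0 : g ω = 0
    · have hm0 : m ω = 0 := by rw [e7, hg0, zero_div]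
      rw [hm0]
      simp only [zero_mul, mul_zero, abs_zero]
      rw [Real.zero_rpow hp0.ne']
      positivity
    · have hgabs : 0 < |g ω| := abs_pos.2 hg0
      have hm : |m ω| = |g ω| ^ (1-p) := by
        rw [e6, Real.rpow_sub hgabs, Real.rpow_one]
      have hBq : ((S (absRpow p f)) ω) ^ (1/q) = 2^((1-p)/q) * |g ω| ^ (p-1) := by
        rw [e5, Real.mul_rpow (by positivity) (Real.rpow_nonneg (abs_nonneg _) _),
          ← Real.rpow_mul (by norm_num : (0:ℝ) ≤ 2), ← Real.rpow_mul (abs_nonneg _)]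
        congr 1
        · rw [mul_one_div]
        · congr 1
          rw [mul_one_div, hqval]
          field_simp
      have hkey : |2^(p-1) * (m ω * (S (h * u)) ω)|
          ≤ 2^((p-1)/p) * ((S (absRpow p h)) ω) ^ (1/p) := by
        rw [abs_mul, abs_mul, abs_of_nonneg (by positivity : (0:ℝ) ≤ 2^(p-1)), hm]
        calc 2^(p-1) * (|g ω| ^ (1-p) * |(S (h * u)) ω|)
            ≤ 2^(p-1) * (|g ω| ^ (1-p) *
              (((S (absRpow p h)) ω) ^ (1/p) * ((S (absRpow p f)) ω) ^ (1/q))) := by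
              apply mul_le_mul_of_nonneg_left
                (mul_le_mul_of_nonneg_left e3 (Real.rpow_nonneg (abs_nonneg _) _))
                (by positivity)
          _ = (2^(p-1) * 2^((1-p)/q)) * ((S (absRpow p h)) ω) ^ (1/p) *
              (|g ω| ^ (1-p) * |g ω| ^ (p-1)) := by rw [hBq]; ring
          _ = 2^((p-1)/p) * ((S (absRpow p h)) ω) ^ (1/p) := by
              rw [← Real.rpow_add (by norm_num : (0:ℝ) < 2), ← Real.rpow_add hgabs,
                show p - 1 + (1-p)/q = (p-1)/p by rw [hqval]; field_simp; ring,
                show (1-p) + (p-1) = 0 by ring, Real.rpow_zero, mul_one]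
      calc |2^(p-1) * (m ω * (S (h * u)) ω)| ^ p
          ≤ (2^((p-1)/p) * ((S (absRpow p h)) ω) ^ (1/p)) ^ p :=
            Real.rpow_le_rpow (abs_nonneg _) hkey hp0.le
        _ = 2^(p-1) * (S (absRpow p h)) ω := by
            rw [Real.mul_rpow (by positivity) (Real.rpow_nonneg e4 _),
              ← Real.rpow_mul (by norm_num : (0:ℝ) ≤ 2), div_mul_cancel₀ _ hp0.ne',
              ← Real.rpow_mul e4, one_div, inv_mul_cancel₀ hp0.ne', Real.rpow_one]
  -- zero belongs to the convexified carriers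
  have habs0 : absRpow p (0 : Ω →ₘ[μ] ℝ) = 0 := by
    apply AEEqFun.ext
    filter_upwards [CA_absRpow_ae p (0 : Ω →ₘ[μ] ℝ), CA_zero_ae] with ω e1 e2
    rw [e1, e2]
    simp [Real.zero_rpow hp0.ne']
  have hzero1 : (0 : Ω →ₘ[μ] ℝ) ∈ (pConv X₁ p).carrier := by
    show absRpow p (0 : Ω →ₘ[μ] ℝ) ∈ X₁.carrier
    rw [habs0]; exact X₁.zero_mem
  have hzero0 : (0 : Ω →ₘ[μ] ℝ) ∈ (pConv X₀ p).carrier := by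
    show absRpow p (0 : Ω →ₘ[μ] ℝ) ∈ X₀.carrier
    rw [habs0]; exact X₀.zero_mem
  -- membership and norm bounds for T on each convexified space
  have hT0 : ∀ h ∈ (pConv X₀ p).carrier, T h ∈ (pConv X₀ p).carrier ∧
      (pConv X₀ p).norm (T h) ≤ 2^(1 - 1/p) * C^(1/p) * (pConv X₀ p).norm h := by
    intro h hh
    have hhsum : h ∈ sumSet (pConv X₀ p) (pConv X₁ p) := ⟨h, hh, 0, hzero1, by rw [add_zero]⟩
    have hA : S (absRpow p h) ∈ X₀.carrier := HS.2.2.1 (absRpow p h) hh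
    have hAnorm : X₀.norm (S (absRpow p h)) ≤ C * X₀.norm (absRpow p h) :=
      HN.1 (absRpow p h) hh
    have hApt := hApos h hhsum
    have hb := hTbound h hhsum
    have hdom : ∀ᵐ ω ∂μ, |(absRpow p (T h)) ω| ≤ |((2:ℝ)^(p-1) • S (absRpow p h)) ω| := by
      filter_upwards [hb, CA_absRpow_ae p (T h), hApt,
        AEEqFun.coeFn_smul ((2:ℝ)^(p-1)) (S (absRpow p h))] with ω e1 e2 e3 e4
      have e4' : ((2:ℝ)^(p-1) • S (absRpow p h)) ω = (2:ℝ)^(p-1) * (S (absRpow p h)) ω := by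
        rw [e4]; rfl
      rw [e4']
      calc |(absRpow p (T h)) ω| = (absRpow p (T h)) ω := by
            rw [e2]; exact abs_of_nonneg (Real.rpow_nonneg (abs_nonneg _) _)
        _ ≤ 2^(p-1) * (S (absRpow p h)) ω := e1
        _ ≤ |2^(p-1) * (S (absRpow p h)) ω| := le_abs_self _
    have hmem := CA_mem_norm (X := X₀) (X₀.smul_mem ((2:ℝ)^(p-1)) hA) hdom
    have h2 : X₀.norm ((2:ℝ)^(p-1) • S (absRpow p h))
        = 2^(p-1) * X₀.norm (S (absRpow p h)) := by
      rw [X₀.norm_smul _ _ hA, abs_of_pos (by positivity)]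
    refine ⟨hmem.1, ?_⟩
    show (X₀.norm (absRpow p (T h))) ^ (1/p)
      ≤ 2^(1 - 1/p) * C^(1/p) * (X₀.norm (absRpow p h)) ^ (1/p)
    have hn : X₀.norm (absRpow p (T h)) ≤ 2^(p-1) * (C * X₀.norm (absRpow p h)) := by
      refine le_trans hmem.2 ?_
      rw [h2]
      exact mul_le_mul_of_nonneg_left hAnorm (by positivity)
    have hnn : (0:ℝ) ≤ C * X₀.norm (absRpow p h) :=
      mul_nonneg hC.le (X₀.norm_nonneg _ hh)
    calc (X₀.norm (absRpow p (T h))) ^ (1/p)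
        ≤ (2^(p-1) * (C * X₀.norm (absRpow p h))) ^ (1/p) :=
          Real.rpow_le_rpow (X₀.norm_nonneg _ hmem.1) hn (by positivity)
      _ = 2^(1 - 1/p) * C^(1/p) * (X₀.norm (absRpow p h)) ^ (1/p) := by
          rw [Real.mul_rpow (by positivity) hnn,
            Real.mul_rpow hC.le (X₀.norm_nonneg _ hh),
            ← Real.rpow_mul (by norm_num : (0:ℝ) ≤ 2),
            show (p-1) * (1/p) = 1 - 1/p by field_simp, mul_assoc]
  have hT1 : ∀ h ∈ (pConv X₁ p).carrier, T h ∈ (pConv X₁ p).carrier ∧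
      (pConv X₁ p).norm (T h) ≤ 2^(1 - 1/p) * C^(1/p) * (pConv X₁ p).norm h := by
    intro h hh
    have hhsum : h ∈ sumSet (pConv X₀ p) (pConv X₁ p) := ⟨0, hzero0, h, hh, by rw [zero_add]⟩
    have hA : S (absRpow p h) ∈ X₁.carrier := HS.2.2.2.1 (absRpow p h) hh
    have hAnorm : X₁.norm (S (absRpow p h)) ≤ C * X₁.norm (absRpow p h) :=
      HN.2 (absRpow p h) hh
    have hApt := hApos h hhsum
    have hb := hTbound h hhsum
    have hdom : ∀ᵐ ω ∂μ, |(absRpow p (T h)) ω| ≤ |((2:ℝ)^(p-1) • S (absRpow p h)) ω| := by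
      filter_upwards [hb, CA_absRpow_ae p (T h), hApt,
        AEEqFun.coeFn_smul ((2:ℝ)^(p-1)) (S (absRpow p h))] with ω e1 e2 e3 e4
      have e4' : ((2:ℝ)^(p-1) • S (absRpow p h)) ω = (2:ℝ)^(p-1) * (S (absRpow p h)) ω := by
        rw [e4]; rfl
      rw [e4']
      calc |(absRpow p (T h)) ω| = (absRpow p (T h)) ω := by
            rw [e2]; exact abs_of_nonneg (Real.rpow_nonneg (abs_nonneg _) _)
        _ ≤ 2^(p-1) * (S (absRpow p h)) ω := e1
        _ ≤ |2^(p-1) * (S (absRpow p h)) ω| := le_abs_self _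
    have hmem := CA_mem_norm (X := X₁) (X₁.smul_mem ((2:ℝ)^(p-1)) hA) hdom
    have h2 : X₁.norm ((2:ℝ)^(p-1) • S (absRpow p h))
        = 2^(p-1) * X₁.norm (S (absRpow p h)) := by
      rw [X₁.norm_smul _ _ hA, abs_of_pos (by positivity)]
    refine ⟨hmem.1, ?_⟩
    show (X₁.norm (absRpow p (T h))) ^ (1/p)
      ≤ 2^(1 - 1/p) * C^(1/p) * (X₁.norm (absRpow p h)) ^ (1/p)
    have hn : X₁.norm (absRpow p (T h)) ≤ 2^(p-1) * (C * X₁.norm (absRpow p h)) := by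
      refine le_trans hmem.2 ?_
      rw [h2]
      exact mul_le_mul_of_nonneg_left hAnorm (by positivity)
    have hnn : (0:ℝ) ≤ C * X₁.norm (absRpow p h) :=
      mul_nonneg hC.le (X₁.norm_nonneg _ hh)
    calc (X₁.norm (absRpow p (T h))) ^ (1/p)
        ≤ (2^(p-1) * (C * X₁.norm (absRpow p h))) ^ (1/p) :=
          Real.rpow_le_rpow (X₁.norm_nonneg _ hmem.1) hn (by positivity)
      _ = 2^(1 - 1/p) * C^(1/p) * (X₁.norm (absRpow p h)) ^ (1/p) := by
          rw [Real.mul_rpow (by positivity) hnn,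
            Real.mul_rpow hC.le (X₁.norm_nonneg _ hh),
            ← Real.rpow_mul (by norm_num : (0:ℝ) ≤ 2),
            show (p-1) * (1/p) = 1 - 1/p by field_simp, mul_assoc]
  -- additivity of T on the sum space
  have hTadd : ∀ h ∈ sumSet (pConv X₀ p) (pConv X₁ p),
      ∀ h' ∈ sumSet (pConv X₀ p) (pConv X₁ p), T (h + h') = T h + T h' := by
    intro h hh h' hh'
    have e1 : (h + h') * u = h * u + h' * u := by
      apply AEEqFun.ext
      filter_upwards [AEEqFun.coeFn_mul (h + h') u, AEEqFun.coeFn_mul h u,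
        AEEqFun.coeFn_mul h' u, AEEqFun.coeFn_add h h',
        AEEqFun.coeFn_add (h * u) (h' * u)] with ω a1 a2 a3 a4 a5
      have a1' : ((h + h') * u) ω = (h + h') ω * u ω := a1
      have a4' : (h + h') ω = h ω + h' ω := a4
      have a5' : (h * u + h' * u) ω = (h * u) ω + (h' * u) ω := a5
      have a2' : (h * u) ω = h ω * u ω := a2
      have a3' : (h' * u) ω = h' ω * u ω := a3
      rw [a1', a4', a5', a2', a3']; ring
    show (2:ℝ)^(p-1) • (m * S ((h + h') * u)) = _
    rw [e1, HS.1 _ (hwmem h hh) _ (hwmem h' hh')]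
    have e2 : m * (S (h * u) + S (h' * u)) = m * S (h * u) + m * S (h' * u) := by
      apply AEEqFun.ext
      filter_upwards [AEEqFun.coeFn_mul m (S (h * u) + S (h' * u)),
        AEEqFun.coeFn_add (S (h * u)) (S (h' * u)),
        AEEqFun.coeFn_add (m * S (h * u)) (m * S (h' * u)),
        AEEqFun.coeFn_mul m (S (h * u)), AEEqFun.coeFn_mul m (S (h' * u))]
        with ω a1 a2 a3 a4 a5
      have a1' : (m * (S (h * u) + S (h' * u))) ω = m ω * (S (h * u) + S (h' * u)) ω := a1
      have a2' : (S (h * u) + S (h' * u)) ω = (S (h * u)) ω + (S (h' * u)) ω := a2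
      have a3' : (m * S (h * u) + m * S (h' * u)) ω
          = (m * S (h * u)) ω + (m * S (h' * u)) ω := a3
      have a4' : (m * S (h * u)) ω = m ω * (S (h * u)) ω := a4
      have a5' : (m * S (h' * u)) ω = m ω * (S (h' * u)) ω := a5
      rw [a1', a2', a3', a4', a5']; ring
    rw [e2, smul_add]
  -- homogeneity of T on the sum space
  have hTsmul : ∀ (c : ℝ), ∀ h ∈ sumSet (pConv X₀ p) (pConv X₁ p), T (c • h) = c • T h := by
    intro c h hh
    have e1 : (c • h) * u = c • (h * u) := by
      apply AEEqFun.ext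
      filter_upwards [AEEqFun.coeFn_mul (c • h) u, AEEqFun.coeFn_smul c h,
        AEEqFun.coeFn_smul c (h * u), AEEqFun.coeFn_mul h u] with ω a1 a2 a3 a4
      have a1' : ((c • h) * u) ω = (c • h) ω * u ω := a1
      have a2' : (c • h) ω = c * h ω := by rw [a2]; rfl
      have a3' : (c • (h * u)) ω = c * (h * u) ω := by rw [a3]; rfl
      have a4' : (h * u) ω = h ω * u ω := a4
      rw [a1', a2', a3', a4']; ring
    show (2:ℝ)^(p-1) • (m * S ((c • h) * u)) = c • ((2:ℝ)^(p-1) • (m * S (h * u)))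
    rw [e1, HS.2.1 c _ (hwmem h hh)]
    have e2 : m * (c • S (h * u)) = c • (m * S (h * u)) := by
      apply AEEqFun.ext
      filter_upwards [AEEqFun.coeFn_mul m (c • S (h * u)), AEEqFun.coeFn_smul c (S (h * u)),
        AEEqFun.coeFn_smul c (m * S (h * u)), AEEqFun.coeFn_mul m (S (h * u))]
        with ω a1 a2 a3 a4
      have a1' : (m * (c • S (h * u))) ω = m ω * (c • S (h * u)) ω := a1
      have a2' : (c • S (h * u)) ω = c * (S (h * u)) ω := by rw [a2]; rfl
      have a3' : (c • (m * S (h * u))) ω = c * (m * S (h * u)) ω := by rw [a3]; rfl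
      have a4' : (m * S (h * u)) ω = m ω * (S (h * u)) ω := a4
      rw [a1', a2', a3', a4']; ring
    rw [e2, smul_comm]
  -- T f = g
  have hTf : T f = g := by
    show (2:ℝ)^(p-1) • (m * S (f * u)) = g
    rw [hfu, hSabs]
    apply AEEqFun.ext
    filter_upwards [AEEqFun.coeFn_smul ((2:ℝ)^(p-1)) (m * ((2:ℝ)^(1-p) • absRpow p g)),
      AEEqFun.coeFn_mul m ((2:ℝ)^(1-p) • absRpow p g),
      AEEqFun.coeFn_smul ((2:ℝ)^(1-p)) (absRpow p g), CA_absRpow_ae p g, hmg]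
      with ω a1 a2 a3 a4 a5
    have a1' : ((2:ℝ)^(p-1) • (m * ((2:ℝ)^(1-p) • absRpow p g))) ω
        = (2:ℝ)^(p-1) * (m * ((2:ℝ)^(1-p) • absRpow p g)) ω := by rw [a1]; rfl
    have a2' : (m * ((2:ℝ)^(1-p) • absRpow p g)) ω
        = m ω * ((2:ℝ)^(1-p) • absRpow p g) ω := a2
    have a3' : ((2:ℝ)^(1-p) • absRpow p g) ω = (2:ℝ)^(1-p) * (absRpow p g) ω := by
      rw [a3]; rfl
    rw [a1', a2', a3', a4]
    calc 2^(p-1) * (m ω * (2^(1-p) * |g ω| ^ p))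
        = (2^(1-p) * 2^(p-1)) * (m ω * |g ω| ^ p) := by ring
      _ = g ω := by rw [h2pow, one_mul, a5]
  -- assemble
  exact ⟨T, ⟨hTadd, hTsmul, fun h hh => (hT0 h hh).1, fun h hh => (hT1 h hh).1,
    ⟨2^(1 - 1/p) * C^(1/p), fun h hh => (hT0 h hh).2⟩,
    ⟨2^(1 - 1/p) * C^(1/p), fun h hh => (hT1 h hh).2⟩⟩,
    hTf, fun h hh => (hT0 h hh).2, fun h hh => (hT1 h hh).2⟩
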